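/- arXiv:1606.06946 — 8 statements merged into one kernel-verified Lean document; each statement's English description precedes it below -/
import Mathlib

section
/- The NFME dissipation function f is differentiable at x = 0 with derivative f′(0) = −τ_M; equivalently, lim_{χ→0⁺} P₂(χ)/χ = −τ_M. -/
open Real Set Filter Topology

/-- The function 𝓡(χ) from the NFME model. -/
noncomputable def Rfun (τA α χ : ℝ) : ℝ :=
  χ + χ ^ (1 - α) * τA ^ (-α) * Real.cos (α * Real.pi / 2) * Real.Gamma (α + 1)

/-- The function 𝓘(χ) from the NFME model. -/
noncomputable def Ifun (τA τM α χ : ℝ) : ℝ :=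
  -1 / τM - χ ^ (1 - α) * τA ^ (-α) * Real.sin (α * Real.pi / 2) * Real.Gamma (α + 1)

/-- The function P₂(χ) from the NFME model. -/
noncomputable def P2 (τA τM A2 α χ : ℝ) : ℝ :=
  Ifun τA τM α χ * χ / ((Rfun τA α χ + A2 * χ) ^ 2 + (Ifun τA τM α χ) ^ 2)

/-- The NFME dissipation function f(x) = P₂(|x|)·sgn(x). -/
noncomputable def nfmeF (τA τM A2 α x : ℝ) : ℝ :=
  P2 τA τM A2 α |x| * Real.sign x

/-- Auxiliary: the "slope" function g(χ) = I(χ) / ((R(χ)+A₂χ)² + I(χ)²). -/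
noncomputable def gfun (τA τM A2 α χ : ℝ) : ℝ :=
  Ifun τA τM α χ / ((Rfun τA α χ + A2 * χ) ^ 2 + (Ifun τA τM α χ) ^ 2)

lemma P2_div_eq_gfun (τA τM A2 α χ : ℝ) (hχ : χ ≠ 0) :
    P2 τA τM A2 α χ / χ = gfun τA τM A2 α χ := by
  unfold P2 gfun
  rw [div_right_comm, mul_div_cancel_right₀ _ hχ]

lemma gfun_tendsto (τA τM A2 α : ℝ) (hτM : 0 < τM) (hα0 : 0 < α) (hα1 : α < 1) :
    Tendsto (gfun τA τM A2 α) (𝓝 0) (𝓝 (-τM)) := by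
  have h1 : ContinuousAt (fun χ : ℝ => χ ^ (1 - α)) 0 :=
    Real.continuousAt_rpow_const 0 (1 - α) (Or.inr (by linarith))
  have cR : ContinuousAt (Rfun τA α) 0 := by
    unfold Rfun
    exact continuousAt_id.add (((h1.mul continuousAt_const).mul continuousAt_const).mul
      continuousAt_const)
  have cI : ContinuousAt (Ifun τA τM α) 0 := by
    unfold Ifun
    exact continuousAt_const.sub (((h1.mul continuousAt_const).mul continuousAt_const).mul
      continuousAt_const)
  have hR0 : Rfun τA α 0 = 0 := by
    simp [Rfun, Real.zero_rpow (by linarith : (1 : ℝ) - α ≠ 0)]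
  have hI0 : Ifun τA τM α 0 = -1 / τM := by
    simp [Ifun, Real.zero_rpow (by linarith : (1 : ℝ) - α ≠ 0)]
  have hD0 : (Rfun τA α 0 + A2 * 0) ^ 2 + (Ifun τA τM α 0) ^ 2 ≠ 0 := by
    rw [hR0, hI0]
    positivity
  have cg : ContinuousAt (gfun τA τM A2 α) 0 := by
    unfold gfun
    exact cI.div (((cR.add (continuousAt_const.mul continuousAt_id)).pow 2).add (cI.pow 2)) hD0
  have hg0 : gfun τA τM A2 α 0 = -τM := by
    unfold gfun
    rw [hR0, hI0]
    field_simp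
    ring
  simpa [hg0] using cg.tendsto

lemma nfmeF_div_eq (τA τM A2 α x : ℝ) (hx : x ≠ 0) :
    nfmeF τA τM A2 α x / x = gfun τA τM A2 α |x| := by
  have habs : |x| ≠ 0 := abs_ne_zero.mpr hx
  have hsign : Real.sign x = x / |x| := by
    rcases hx.lt_or_gt with h | h
    · rw [Real.sign_of_neg h, abs_of_neg h, div_neg, div_self hx]
    · rw [Real.sign_of_pos h, abs_of_pos h, div_self hx]
  rw [← P2_div_eq_gfun τA τM A2 α |x| habs, nfmeF, hsign, ← mul_div_assoc, div_right_comm,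
    mul_div_cancel_right₀ _ hx]

/-- The NFME dissipation function f is differentiable at x = 0 with derivative
f′(0) = −τ_M; equivalently, lim_{χ→0⁺} P₂(χ)/χ = −τ_M. -/
theorem nfmeF_hasDerivAt_zero (τA τM A2 α : ℝ) (hτA : 0 < τA) (hτM : 0 < τM) (hA2 : 0 < A2)
    (hα0 : 0 < α) (hα1 : α < 1) :
    HasDerivAt (nfmeF τA τM A2 α) (-τM) 0 ∧
    Tendsto (fun χ : ℝ => P2 τA τM A2 α χ / χ) (𝓝[>] 0) (𝓝 (-τM)) := by
  have hg := gfun_tendsto τA τM A2 α hτM hα0 hα1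
  constructor
  · rw [hasDerivAt_iff_tendsto_slope]
    have habs : Tendsto (fun x : ℝ => |x|) (𝓝[≠] (0:ℝ)) (𝓝 0) := by
      simpa using (continuous_abs.tendsto (0:ℝ)).mono_left nhdsWithin_le_nhds
    refine (hg.comp habs).congr' ?_
    filter_upwards [self_mem_nhdsWithin] with x hx
    have hx' : x ≠ 0 := hx
    have hF0 : nfmeF τA τM A2 α 0 = 0 := by simp [nfmeF, Real.sign_zero]
    simp only [Function.comp, slope_def_field, hF0, sub_zero]
    exact (nfmeF_div_eq τA τM A2 α x hx').symm
  · refine (hg.mono_left nhdsWithin_le_nhds).congr' ?_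
    filter_upwards [self_mem_nhdsWithin] with χ hχ
    exact (P2_div_eq_gfun τA τM A2 α χ (ne_of_gt hχ)).symm
end

section
/- The NFME dissipation function f is continuously differentiable (of class C¹) on all of ℝ. -/
open Real Set Filter Topology

/-- Numerator helper. -/
noncomputable def Naux (τM Cs β x : ℝ) : ℝ := -1 / τM - |x| ^ β * Cs

/-- Denominator helper. -/
noncomputable def Daux (τM A2 Cc Cs β x : ℝ) : ℝ :=
  ((1 + A2) * |x| + |x| ^ β * Cc) ^ 2 + (1 / τM + |x| ^ β * Cs) ^ 2

/-- `x * D'(x)` helper. -/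
noncomputable def XDaux (τM A2 Cc Cs β x : ℝ) : ℝ :=
  2 * ((1 + A2) * |x| + |x| ^ β * Cc) * ((1 + A2) * |x| + β * (|x| ^ β * Cc))
    + 2 * (1 / τM + |x| ^ β * Cs) * (β * (|x| ^ β * Cs))

/-- The reformulated dissipation function. -/
noncomputable def Faux (τM A2 Cc Cs β x : ℝ) : ℝ :=
  x * Naux τM Cs β x / Daux τM A2 Cc Cs β x

/-- Explicit derivative of `Faux`. -/
noncomputable def F'aux (τM A2 Cc Cs β x : ℝ) : ℝ :=
  ((Naux τM Cs β x + -(β * (|x| ^ β * Cs))) * Daux τM A2 Cc Cs β x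
    - Naux τM Cs β x * XDaux τM A2 Cc Cs β x) / (Daux τM A2 Cc Cs β x) ^ 2

lemma Daux_pos (τM A2 Cc Cs β : ℝ) (hτM : 0 < τM) (hCs : 0 ≤ Cs) (x : ℝ) :
    0 < Daux τM A2 Cc Cs β x := by
  have h1 : 0 ≤ |x| ^ β * Cs := mul_nonneg (Real.rpow_nonneg (abs_nonneg x) β) hCs
  have h2 : 0 < 1 / τM + |x| ^ β * Cs := by
    have : 0 < 1 / τM := by positivity
    linarith
  exact add_pos_of_nonneg_of_pos (sq_nonneg _) (pow_pos h2 2)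

lemma cont_abs_rpow (β : ℝ) (hβ : 0 < β) : Continuous fun x : ℝ => |x| ^ β := by
  rw [continuous_iff_continuousAt]
  intro x
  exact (Real.continuousAt_rpow_const _ _ (Or.inr hβ.le)).comp continuous_abs.continuousAt

lemma cont_F'aux (τM A2 Cc Cs β : ℝ) (hτM : 0 < τM) (hCs : 0 ≤ Cs) (hβ : 0 < β) :
    Continuous (F'aux τM A2 Cc Cs β) := by
  have hc := cont_abs_rpow β hβ
  have hN : Continuous (Naux τM Cs β) := continuous_const.sub (hc.mul continuous_const)
  have hA : Continuous (fun x : ℝ => (1 + A2) * |x| + |x| ^ β * Cc) :=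
    (continuous_const.mul continuous_abs).add (hc.mul continuous_const)
  have hB : Continuous (fun x : ℝ => 1 / τM + |x| ^ β * Cs) :=
    continuous_const.add (hc.mul continuous_const)
  have hD : Continuous (Daux τM A2 Cc Cs β) := (hA.pow 2).add (hB.pow 2)
  have hA2 : Continuous (fun x : ℝ => (1 + A2) * |x| + β * (|x| ^ β * Cc)) :=
    (continuous_const.mul continuous_abs).add (continuous_const.mul (hc.mul continuous_const))
  have hXD : Continuous (XDaux τM A2 Cc Cs β) :=
    (((continuous_const.mul hA).mul hA2).add
      ((continuous_const.mul hB).mul (continuous_const.mul (hc.mul continuous_const))))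
  have hE : Continuous (fun x : ℝ => -(β * (|x| ^ β * Cs))) :=
    (continuous_const.mul (hc.mul continuous_const)).neg
  exact (((hN.add hE).mul hD).sub (hN.mul hXD)).div (hD.pow 2)
    (fun x => pow_ne_zero 2 (Daux_pos τM A2 Cc Cs β hτM hCs x).ne')

set_option maxHeartbeats 1000000 in
lemma hasDerivAt_Faux (τM A2 Cc Cs β : ℝ) (hτM : 0 < τM) (hCs : 0 ≤ Cs) (hβ : 0 < β) (x : ℝ) :
    HasDerivAt (Faux τM A2 Cc Cs β) (F'aux τM A2 Cc Cs β x) x := by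
  have hDpos := Daux_pos τM A2 Cc Cs β hτM hCs
  rcases lt_trichotomy x 0 with hx | rfl | hx
  · -- negative case
    have hx' : (0:ℝ) < -x := by linarith
    have hp : HasDerivAt (fun z : ℝ => z ^ β) (β * (-x) ^ (β - 1)) (-x) :=
      Real.hasDerivAt_rpow_const (Or.inl hx'.ne')
    have hq : HasDerivAt (fun y : ℝ => (-y) ^ β) (β * (-x) ^ (β - 1) * -1) x :=
      hp.comp x (hasDerivAt_id x).neg
    have hN : HasDerivAt (fun y : ℝ => -1 / τM - (-y) ^ β * Cs)
        (-(β * (-x) ^ (β - 1) * -1 * Cs)) x :=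
      (hq.mul_const Cs).const_sub _
    have hA : HasDerivAt (fun y : ℝ => (1 + A2) * -y + (-y) ^ β * Cc)
        ((1 + A2) * -1 + β * (-x) ^ (β - 1) * -1 * Cc) x :=
      (((hasDerivAt_id x).neg).const_mul (1 + A2)).add (hq.mul_const Cc)
    have hB : HasDerivAt (fun y : ℝ => 1 / τM + (-y) ^ β * Cs)
        (β * (-x) ^ (β - 1) * -1 * Cs) x :=
      (hq.mul_const Cs).const_add _
    have hD : HasDerivAt
        (fun y : ℝ => ((1 + A2) * -y + (-y) ^ β * Cc) ^ 2 + (1 / τM + (-y) ^ β * Cs) ^ 2)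
        ((2 : ℕ) * ((1 + A2) * -x + (-x) ^ β * Cc) ^ 1
            * ((1 + A2) * -1 + β * (-x) ^ (β - 1) * -1 * Cc)
          + (2 : ℕ) * (1 / τM + (-x) ^ β * Cs) ^ 1 * (β * (-x) ^ (β - 1) * -1 * Cs)) x :=
      (hA.pow 2).add (hB.pow 2)
    have hnum : HasDerivAt (fun y : ℝ => y * (-1 / τM - (-y) ^ β * Cs))
        (1 * (-1 / τM - (-x) ^ β * Cs) + x * -(β * (-x) ^ (β - 1) * -1 * Cs)) x :=
      (hasDerivAt_id x).mul hN
    have hden_eq : ((1 + A2) * -x + (-x) ^ β * Cc) ^ 2 + (1 / τM + (-x) ^ β * Cs) ^ 2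
        = Daux τM A2 Cc Cs β x := by
      rw [Daux, abs_of_neg hx]
    have hne : ((1 + A2) * -x + (-x) ^ β * Cc) ^ 2 + (1 / τM + (-x) ^ β * Cs) ^ 2 ≠ 0 := by
      rw [hden_eq]; exact (hDpos x).ne'
    have hF := hnum.div hD hne
    have hev : Faux τM A2 Cc Cs β =ᶠ[𝓝 x] fun y : ℝ =>
        y * (-1 / τM - (-y) ^ β * Cs)
          / (((1 + A2) * -y + (-y) ^ β * Cc) ^ 2 + (1 / τM + (-y) ^ β * Cs) ^ 2) := by
      filter_upwards [Iio_mem_nhds hx] with y hy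
      simp only [Faux, Naux, Daux, abs_of_neg (show y < (0:ℝ) from hy)]
    have h2 := hF.congr_of_eventuallyEq hev
    refine h2.congr_deriv ?_
    simp only [F'aux, Naux, Daux, XDaux, abs_of_neg hx]
    have hx1 : (-x) ^ (β - 1) = (-x) ^ β / -x := by
      rw [Real.rpow_sub hx', Real.rpow_one]
    rw [hx1]
    have hxne : x ≠ 0 := hx.ne
    field_simp [hxne]
    ring
  · -- zero case
    rw [hasDerivAt_iff_tendsto_slope]
    have hslope : (fun y => Naux τM Cs β y / Daux τM A2 Cc Cs β y)
        =ᶠ[𝓝[≠] (0:ℝ)] slope (Faux τM A2 Cc Cs β) 0 := by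
      filter_upwards [self_mem_nhdsWithin] with y hy
      have hy0 : y ≠ 0 := hy
      rw [slope_def_field, Faux]
      have h0 : Faux τM A2 Cc Cs β 0 = 0 := by simp [Faux]
      rw [show Faux τM A2 Cc Cs β 0 = 0 from h0]
      field_simp
      rw [sub_zero, sub_zero]
    have hc := cont_abs_rpow β hβ
    have hN : Continuous (Naux τM Cs β) := continuous_const.sub (hc.mul continuous_const)
    have hA : Continuous (fun x : ℝ => (1 + A2) * |x| + |x| ^ β * Cc) :=
      (continuous_const.mul continuous_abs).add (hc.mul continuous_const)
    have hB : Continuous (fun x : ℝ => 1 / τM + |x| ^ β * Cs) :=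
      continuous_const.add (hc.mul continuous_const)
    have hD : Continuous (Daux τM A2 Cc Cs β) := (hA.pow 2).add (hB.pow 2)
    have hcont : ContinuousAt (fun y => Naux τM Cs β y / Daux τM A2 Cc Cs β y) 0 :=
      (hN.continuousAt).div (hD.continuousAt) (hDpos 0).ne'
    have hT : Tendsto (fun y => Naux τM Cs β y / Daux τM A2 Cc Cs β y) (𝓝[≠] (0:ℝ))
        (𝓝 (Naux τM Cs β 0 / Daux τM A2 Cc Cs β 0)) :=
      hcont.tendsto.mono_left nhdsWithin_le_nhds
    have heq : F'aux τM A2 Cc Cs β 0 = Naux τM Cs β 0 / Daux τM A2 Cc Cs β 0 := by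
      have hd := (hDpos 0).ne'
      rw [F'aux]
      rw [show XDaux τM A2 Cc Cs β 0 = 0 by
        simp [XDaux, Real.zero_rpow hβ.ne']]
      rw [show -(β * (|(0:ℝ)| ^ β * Cs)) = 0 by simp [Real.zero_rpow hβ.ne']]
      rw [sq]
      field_simp
      ring
    rw [heq]
    exact hT.congr' hslope
  · -- positive case
    have hp : HasDerivAt (fun y : ℝ => y ^ β) (β * x ^ (β - 1)) x :=
      Real.hasDerivAt_rpow_const (Or.inl hx.ne')
    have hN : HasDerivAt (fun y : ℝ => -1 / τM - y ^ β * Cs) (-(β * x ^ (β - 1) * Cs)) x :=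
      (hp.mul_const Cs).const_sub _
    have hA : HasDerivAt (fun y : ℝ => (1 + A2) * y + y ^ β * Cc)
        ((1 + A2) * 1 + β * x ^ (β - 1) * Cc) x :=
      ((hasDerivAt_id x).const_mul (1 + A2)).add (hp.mul_const Cc)
    have hB : HasDerivAt (fun y : ℝ => 1 / τM + y ^ β * Cs) (β * x ^ (β - 1) * Cs) x :=
      (hp.mul_const Cs).const_add _
    have hD : HasDerivAt
        (fun y : ℝ => ((1 + A2) * y + y ^ β * Cc) ^ 2 + (1 / τM + y ^ β * Cs) ^ 2)
        ((2 : ℕ) * ((1 + A2) * x + x ^ β * Cc) ^ 1 * ((1 + A2) * 1 + β * x ^ (β - 1) * Cc)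
          + (2 : ℕ) * (1 / τM + x ^ β * Cs) ^ 1 * (β * x ^ (β - 1) * Cs)) x :=
      (hA.pow 2).add (hB.pow 2)
    have hnum : HasDerivAt (fun y : ℝ => y * (-1 / τM - y ^ β * Cs))
        (1 * (-1 / τM - x ^ β * Cs) + x * -(β * x ^ (β - 1) * Cs)) x :=
      (hasDerivAt_id x).mul hN
    have hden_eq : ((1 + A2) * x + x ^ β * Cc) ^ 2 + (1 / τM + x ^ β * Cs) ^ 2
        = Daux τM A2 Cc Cs β x := by
      rw [Daux, abs_of_pos hx]
    have hne : ((1 + A2) * x + x ^ β * Cc) ^ 2 + (1 / τM + x ^ β * Cs) ^ 2 ≠ 0 := by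
      rw [hden_eq]; exact (hDpos x).ne'
    have hF := hnum.div hD hne
    have hev : Faux τM A2 Cc Cs β =ᶠ[𝓝 x] fun y : ℝ =>
        y * (-1 / τM - y ^ β * Cs)
          / (((1 + A2) * y + y ^ β * Cc) ^ 2 + (1 / τM + y ^ β * Cs) ^ 2) := by
      filter_upwards [Ioi_mem_nhds hx] with y hy
      simp only [Faux, Naux, Daux, abs_of_pos (show (0:ℝ) < y from hy)]
    have h2 := hF.congr_of_eventuallyEq hev
    refine h2.congr_deriv ?_
    simp only [F'aux, Naux, Daux, XDaux, abs_of_pos hx]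
    have hx1 : x ^ (β - 1) = x ^ β / x := by
      rw [Real.rpow_sub hx, Real.rpow_one]
    rw [hx1]
    field_simp
    ring

/-- The NFME dissipation function f is continuously differentiable (C¹) on ℝ. -/
theorem nfmeF_contDiff_one (τA τM A2 α : ℝ) (hτA : 0 < τA) (hτM : 0 < τM) (hA2 : 0 < A2)
    (hα0 : 0 < α) (hα1 : α < 1) :
    ContDiff ℝ 1 (nfmeF τA τM A2 α) := by
  have hβ : 0 < 1 - α := by linarith
  have hCs0 : 0 ≤ τA ^ (-α) * Real.sin (α * Real.pi / 2) * Real.Gamma (α + 1) := by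
    have h1 : (0:ℝ) < τA ^ (-α) := Real.rpow_pos_of_pos hτA _
    have h2 : 0 < Real.sin (α * Real.pi / 2) := by
      apply Real.sin_pos_of_pos_of_lt_pi
      · have := Real.pi_pos; positivity
      · have hπ := Real.pi_pos
        nlinarith [Real.pi_pos]
    have h3 : 0 < Real.Gamma (α + 1) := Real.Gamma_pos_of_pos (by linarith)
    positivity
  have hfe : nfmeF τA τM A2 α
      = Faux τM A2 (τA ^ (-α) * Real.cos (α * Real.pi / 2) * Real.Gamma (α + 1))
          (τA ^ (-α) * Real.sin (α * Real.pi / 2) * Real.Gamma (α + 1)) (1 - α) := by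
    funext x
    have hs : |x| * Real.sign x = x := by
      rcases lt_trichotomy x 0 with h | rfl | h
      · rw [Real.sign_of_neg h, abs_of_neg h]; ring
      · simp
      · rw [Real.sign_of_pos h, abs_of_pos h]; ring
    simp only [nfmeF, P2, Ifun, Rfun, Faux, Naux, Daux]
    calc Ifun τA τM α |x| * |x|
          / ((Rfun τA α |x| + A2 * |x|) ^ 2 + Ifun τA τM α |x| ^ 2) * Real.sign x
        = Ifun τA τM α |x| * (|x| * Real.sign x)
          / ((Rfun τA α |x| + A2 * |x|) ^ 2 + Ifun τA τM α |x| ^ 2) := by ring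
      _ = Ifun τA τM α |x| * x
          / ((Rfun τA α |x| + A2 * |x|) ^ 2 + Ifun τA τM α |x| ^ 2) := by rw [hs]
      _ = x * Naux τM (τA ^ (-α) * Real.sin (α * Real.pi / 2) * Real.Gamma (α + 1)) (1 - α) x
          / Daux τM A2 (τA ^ (-α) * Real.cos (α * Real.pi / 2) * Real.Gamma (α + 1))
            (τA ^ (-α) * Real.sin (α * Real.pi / 2) * Real.Gamma (α + 1)) (1 - α) x := by
          simp only [Ifun, Rfun, Naux, Daux]
          ring
  rw [hfe, contDiff_one_iff_deriv]
  have hder := hasDerivAt_Faux τM A2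
    (τA ^ (-α) * Real.cos (α * Real.pi / 2) * Real.Gamma (α + 1))
    (τA ^ (-α) * Real.sin (α * Real.pi / 2) * Real.Gamma (α + 1)) (1 - α) hτM hCs0 hβ
  refine ⟨fun x => (hder x).differentiableAt, ?_⟩
  have hde : deriv (Faux τM A2 (τA ^ (-α) * Real.cos (α * Real.pi / 2) * Real.Gamma (α + 1))
      (τA ^ (-α) * Real.sin (α * Real.pi / 2) * Real.Gamma (α + 1)) (1 - α))
      = F'aux τM A2 (τA ^ (-α) * Real.cos (α * Real.pi / 2) * Real.Gamma (α + 1))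
        (τA ^ (-α) * Real.sin (α * Real.pi / 2) * Real.Gamma (α + 1)) (1 - α) :=
    funext fun x => (hder x).deriv
  rw [hde]
  exact cont_F'aux _ _ _ _ _ hτM hCs0 hβ
end

section
/- The leading non-smooth behaviour of P₂ at the origin is of order χ^{2−α}: lim_{χ→0⁺} (P₂(χ) + τ_M χ)/χ^{2−α} = τ_M² τ_A^{−α} sin(απ/2) Γ(α+1). -/
set_option maxHeartbeats 1000000


open Real Set Filter Topology

/-- The leading non-smooth behaviour of P₂ at the origin is of order χ^{2−α}:
lim_{χ→0⁺} (P₂(χ) + τ_M χ)/χ^{2−α} = τ_M² τ_A^{−α} sin(απ/2) Γ(α+1). -/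
theorem P2_leading_nonsmooth (τA τM A2 α : ℝ) (hτA : 0 < τA) (hτM : 0 < τM) (hA2 : 0 < A2)
    (hα0 : 0 < α) (hα1 : α < 1) :
    Tendsto (fun χ : ℝ => (P2 τA τM A2 α χ + τM * χ) / χ ^ (2 - α)) (𝓝[>] 0)
      (𝓝 (τM ^ 2 * τA ^ (-α) * Real.sin (α * Real.pi / 2) * Real.Gamma (α + 1))) := by
  have hπ := Real.pi_pos
  set c := Real.cos (α * Real.pi / 2) with hc
  set s := Real.sin (α * Real.pi / 2) with hsdef
  set Γ := Real.Gamma (α + 1) with hΓdef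
  have hΓ : 0 < Γ := Real.Gamma_pos_of_pos (by linarith)
  have hs : 0 < s := by
    apply Real.sin_pos_of_pos_of_lt_pi <;> nlinarith
  have hτ : (0:ℝ) < τA ^ (-α) := Real.rpow_pos_of_pos hτA _
  have h1α : (0:ℝ) < 1 - α := by linarith
  -- limits of the pieces
  have hy : Tendsto (fun χ : ℝ => χ ^ (1 - α)) (𝓝[>] 0) (𝓝 0) := by
    have h := (Real.continuousAt_rpow_const 0 (1 - α) (Or.inr (le_of_lt h1α))).tendsto
    rw [Real.zero_rpow (ne_of_gt h1α)] at h
    exact h.mono_left nhdsWithin_le_nhds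
  have hz : Tendsto (fun χ : ℝ => χ ^ α) (𝓝[>] 0) (𝓝 0) := by
    have h := (Real.continuousAt_rpow_const 0 α (Or.inr (le_of_lt hα0))).tendsto
    rw [Real.zero_rpow (ne_of_gt hα0)] at h
    exact h.mono_left nhdsWithin_le_nhds
  have hid : Tendsto (fun χ : ℝ => χ) (𝓝[>] 0) (𝓝 0) :=
    tendsto_id.mono_left nhdsWithin_le_nhds
  -- the auxiliary function
  have hnum' : Tendsto (fun χ : ℝ =>
      τA ^ (-α) * s * Γ
        + τM * χ ^ (1 - α) * ((1 + A2) * χ ^ α + τA ^ (-α) * c * Γ) ^ 2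
        + τM * χ ^ (1 - α) * (τA ^ (-α) * s * Γ) ^ 2) (𝓝[>] 0)
      (𝓝 (τA ^ (-α) * s * Γ
        + τM * 0 * ((1 + A2) * 0 + τA ^ (-α) * c * Γ) ^ 2
        + τM * 0 * (τA ^ (-α) * s * Γ) ^ 2)) :=
    (tendsto_const_nhds.add
      ((tendsto_const_nhds.mul hy).mul
        (((tendsto_const_nhds.mul hz).add tendsto_const_nhds).pow 2))).add
      ((tendsto_const_nhds.mul hy).mul tendsto_const_nhds)
  have hnum : Tendsto (fun χ : ℝ =>
      τA ^ (-α) * s * Γ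
        + τM * χ ^ (1 - α) * ((1 + A2) * χ ^ α + τA ^ (-α) * c * Γ) ^ 2
        + τM * χ ^ (1 - α) * (τA ^ (-α) * s * Γ) ^ 2) (𝓝[>] 0)
      (𝓝 (τA ^ (-α) * s * Γ)) := by
    convert hnum' using 2
    ring
  have hden' : Tendsto (fun χ : ℝ =>
      ((1 + A2) * χ + χ ^ (1 - α) * τA ^ (-α) * c * Γ) ^ 2
        + (1 / τM + χ ^ (1 - α) * τA ^ (-α) * s * Γ) ^ 2) (𝓝[>] 0)
      (𝓝 (((1 + A2) * 0 + 0 * τA ^ (-α) * c * Γ) ^ 2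
        + (1 / τM + 0 * τA ^ (-α) * s * Γ) ^ 2)) :=
    (((tendsto_const_nhds.mul hid).add
        (((hy.mul tendsto_const_nhds).mul tendsto_const_nhds).mul tendsto_const_nhds)).pow 2).add
      ((tendsto_const_nhds.add
        (((hy.mul tendsto_const_nhds).mul tendsto_const_nhds).mul tendsto_const_nhds)).pow 2)
  have hden : Tendsto (fun χ : ℝ =>
      ((1 + A2) * χ + χ ^ (1 - α) * τA ^ (-α) * c * Γ) ^ 2
        + (1 / τM + χ ^ (1 - α) * τA ^ (-α) * s * Γ) ^ 2) (𝓝[>] 0)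
      (𝓝 (1 / τM ^ 2)) := by
    convert hden' using 2
    field_simp
    simp
  have hdenne : (1 / τM ^ 2 : ℝ) ≠ 0 := by positivity
  have hmain := hnum.div hden hdenne
  have hval : τA ^ (-α) * s * Γ / (1 / τM ^ 2)
      = τM ^ 2 * τA ^ (-α) * s * Γ := by field_simp
  rw [hval] at hmain
  refine hmain.congr' ?_
  filter_upwards [self_mem_nhdsWithin] with χ (hχ : 0 < χ)
  -- algebraic identity on (0, ∞)
  set y := χ ^ (1 - α) with hydef
  set z := χ ^ α with hzdef
  have hy0 : 0 < y := Real.rpow_pos_of_pos hχ _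
  have hz0 : 0 < z := Real.rpow_pos_of_pos hχ _
  have hyz : y * z = χ := by
    rw [hydef, hzdef, ← Real.rpow_add hχ]
    simp
  have h2α : χ ^ (2 - α) = χ * y := by
    rw [hydef, show (2:ℝ) - α = 1 + (1 - α) by ring, Real.rpow_add hχ, Real.rpow_one]
  have hIneg : -1 / τM - y * τA ^ (-α) * s * Γ < 0 := by
    rw [show (-1:ℝ) / τM = -(1 / τM) by ring]
    have h1 : 0 < y * τA ^ (-α) * s * Γ :=
      mul_pos (mul_pos (mul_pos hy0 hτ) hs) hΓ
    have h2 : 0 < 1 / τM := by positivity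
    linarith
  have e1 : ((y * z + y * τA ^ (-α) * c * Γ + A2 * (y * z)) ^ 2
      + (-1 / τM - y * τA ^ (-α) * s * Γ) ^ 2) ≠ 0 := by
    have : 0 < (-1 / τM - y * τA ^ (-α) * s * Γ) ^ 2 := by nlinarith [hIneg]
    nlinarith [sq_nonneg (y * z + y * τA ^ (-α) * c * Γ + A2 * (y * z))]
  have e2 : (((1 + A2) * (y * z) + y * τA ^ (-α) * c * Γ) ^ 2
      + (1 / τM + y * τA ^ (-α) * s * Γ) ^ 2) ≠ 0 := by
    have h1 : 0 < 1 / τM + y * τA ^ (-α) * s * Γ :=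
      add_pos (by positivity) (mul_pos (mul_pos (mul_pos hy0 hτ) hs) hΓ)
    nlinarith [sq_nonneg ((1 + A2) * (y * z) + y * τA ^ (-α) * c * Γ)]
  simp only [Pi.div_apply]
  rw [P2, Rfun, Ifun, h2α, ← hydef, ← hzdef, ← hc, ← hsdef, ← hΓdef, ← hyz]
  have hDD : (y * z + y * τA ^ (-α) * c * Γ + A2 * (y * z)) ^ 2
      + (-1 / τM - y * τA ^ (-α) * s * Γ) ^ 2
      = ((1 + A2) * (y * z) + y * τA ^ (-α) * c * Γ) ^ 2
        + (1 / τM + y * τA ^ (-α) * s * Γ) ^ 2 := by ring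
  rw [hDD, div_add' _ _ _ e2, div_div,
    div_eq_div_iff e2 (mul_ne_zero e2
      (mul_ne_zero (mul_ne_zero hy0.ne' hz0.ne') hy0.ne'))]
  have huτ : τM * (1 / τM) = 1 := mul_one_div_cancel hτM.ne'
  linear_combination (-(((1 + A2) * (y * z) + y * τA ^ (-α) * c * Γ) ^ 2
        + (1 / τM + y * τA ^ (-α) * s * Γ) ^ 2)
      * (y * z) * (1 / τM + 2 * (y * (τA ^ (-α) * s * Γ)))) * huτ
end

section
/- The NFME dissipation function f is not twice differentiable at x = 0: its derivative f′ (which exists and is continuous on ℝ) is not differentiable at 0, i.e. f′ displays a cusp at the kink. -/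
open Real Set Filter Topology

/- ### Auxiliary machinery -/

noncomputable def Gnum (τM c1 α w : ℝ) : ℝ := -1 / τM - c1 * w ^ ((1 - α) / 2)

noncomputable def Gden (τM A2 c1 c2 α w : ℝ) : ℝ :=
  (1 + A2) ^ 2 * w + 2 * (1 + A2) * c2 * w ^ ((2 - α) / 2) + c2 ^ 2 * w ^ (1 - α)
    + (1 / τM + c1 * w ^ ((1 - α) / 2)) ^ 2

noncomputable def Gfun (τM A2 c1 c2 α w : ℝ) : ℝ := Gnum τM c1 α w / Gden τM A2 c1 c2 α w

noncomputable def Gnd (c1 α w : ℝ) : ℝ := -(c1 * ((1 - α) / 2 * w ^ ((1 - α) / 2 - 1)))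

noncomputable def Gdd (τM A2 c1 c2 α w : ℝ) : ℝ :=
  (1 + A2) ^ 2 + 2 * (1 + A2) * c2 * ((2 - α) / 2 * w ^ ((2 - α) / 2 - 1))
    + c2 ^ 2 * ((1 - α) * w ^ (1 - α - 1))
    + 2 * (1 / τM + c1 * w ^ ((1 - α) / 2)) * (c1 * ((1 - α) / 2 * w ^ ((1 - α) / 2 - 1)))

noncomputable def Gp (τM A2 c1 c2 α w : ℝ) : ℝ :=
  (Gnd c1 α w * Gden τM A2 c1 c2 α w - Gnum τM c1 α w * Gdd τM A2 c1 c2 α w)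
    / (Gden τM A2 c1 c2 α w) ^ 2

noncomputable def F1 (τM A2 c1 c2 α w : ℝ) : ℝ :=
  (c1 + τM * (1 + A2) ^ 2 * w ^ ((1 + α) / 2) + 2 * τM * (1 + A2) * c2 * w ^ ((1:ℝ)/2)
    + τM * (c1 ^ 2 + c2 ^ 2) * w ^ ((1 - α) / 2)) / Gden τM A2 c1 c2 α w

noncomputable def F2 (τM A2 c1 c2 α w : ℝ) : ℝ :=
  2 * (-(c1 * ((1 - α) / 2)) * Gden τM A2 c1 c2 α w
    - Gnum τM c1 α w * ((1 + A2) ^ 2 * w ^ ((1 + α) / 2)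
      + 2 * (1 + A2) * c2 * ((2 - α) / 2 * w ^ ((1:ℝ)/2))
      + c2 ^ 2 * ((1 - α) * w ^ ((1 - α) / 2))
      + 2 * (1 / τM + c1 * w ^ ((1 - α) / 2)) * (c1 * ((1 - α) / 2))))
    / (Gden τM A2 c1 c2 α w) ^ 2

noncomputable def F3 (τM A2 c1 c2 α w : ℝ) : ℝ :=
  2 * (-(c1 * ((1 - α) / 2 * w ^ ((1 - α) / 2))) * Gden τM A2 c1 c2 α w
    - Gnum τM c1 α w * ((1 + A2) ^ 2 * w
      + 2 * (1 + A2) * c2 * ((2 - α) / 2 * w ^ ((2 - α) / 2))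
      + c2 ^ 2 * ((1 - α) * w ^ (1 - α))
      + 2 * (1 / τM + c1 * w ^ ((1 - α) / 2)) * (c1 * ((1 - α) / 2 * w ^ ((1 - α) / 2)))))
    / (Gden τM A2 c1 c2 α w) ^ 2

lemma Gden_pos {τM A2 c1 c2 α : ℝ} (hτM : 0 < τM) (hA2 : 0 < A2) (hc1 : 0 ≤ c1)
    (hc2 : 0 ≤ c2) {w : ℝ} (hw : 0 ≤ w) : 0 < Gden τM A2 c1 c2 α w := by
  have h0 := Real.rpow_nonneg hw ((1 - α) / 2)
  have h1 : 0 < 1 / τM + c1 * w ^ ((1 - α) / 2) := by positivity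
  have h2 : 0 ≤ (1 + A2) ^ 2 * w + 2 * (1 + A2) * c2 * w ^ ((2 - α) / 2)
      + c2 ^ 2 * w ^ (1 - α) := by
    have := Real.rpow_nonneg hw ((2 - α) / 2)
    have := Real.rpow_nonneg hw (1 - α)
    positivity
  have := pow_pos h1 2
  unfold Gden; linarith

lemma Gden_zero {τM A2 c1 c2 α : ℝ} (hα1 : α < 1) (hα0 : 0 < α) :
    Gden τM A2 c1 c2 α 0 = (1 / τM) ^ 2 := by
  unfold Gden
  rw [Real.zero_rpow (by linarith : (0:ℝ) < (1 - α) / 2).ne',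
    Real.zero_rpow (by linarith : (0:ℝ) < (2 - α) / 2).ne',
    Real.zero_rpow (by linarith : (0:ℝ) < 1 - α).ne']
  ring

lemma Gnum_zero {τM c1 α : ℝ} (hα1 : α < 1) : Gnum τM c1 α 0 = -1 / τM := by
  unfold Gnum
  rw [Real.zero_rpow (by linarith : (0:ℝ) < (1 - α) / 2).ne']
  ring

lemma Gfun_zero {τM A2 c1 c2 α : ℝ} (hτM : 0 < τM) (hα1 : α < 1) (hα0 : 0 < α) :
    Gfun τM A2 c1 c2 α 0 = -τM := by
  unfold Gfun
  rw [Gden_zero hα1 hα0, Gnum_zero hα1]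
  field_simp

lemma cont_rpow {e : ℝ} (he : 0 ≤ e) : Continuous fun w : ℝ => w ^ e :=
  Real.continuous_rpow_const he

lemma Gnum_cont {τM c1 α : ℝ} (hα1 : α < 1) : Continuous (Gnum τM c1 α) := by
  unfold Gnum
  exact continuous_const.sub (continuous_const.mul (cont_rpow (by linarith : (0:ℝ) ≤ (1 - α) / 2)))

lemma Gden_cont {τM A2 c1 c2 α : ℝ} (hα1 : α < 1) (hα0 : 0 < α) :
    Continuous (Gden τM A2 c1 c2 α) := by
  unfold Gden
  have h1 : (0:ℝ) ≤ (1 - α) / 2 := by linarith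
  have h2 : (0:ℝ) ≤ (2 - α) / 2 := by linarith
  have h3 : (0:ℝ) ≤ 1 - α := by linarith
  exact (((continuous_const.mul continuous_id).add (continuous_const.mul (cont_rpow h2))).add
    (continuous_const.mul (cont_rpow h3))).add
    ((continuous_const.add (continuous_const.mul (cont_rpow h1))).pow 2)

lemma Gnum_hasDeriv {τM c1 α w : ℝ} (hw : 0 < w) :
    HasDerivAt (Gnum τM c1 α) (Gnd c1 α w) w := by
  unfold Gnum Gnd
  exact ((Real.hasDerivAt_rpow_const (Or.inl hw.ne')).const_mul c1).const_sub (-1 / τM)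

lemma Gden_hasDeriv {τM A2 c1 c2 α w : ℝ} (hw : 0 < w) :
    HasDerivAt (Gden τM A2 c1 c2 α) (Gdd τM A2 c1 c2 α w) w := by
  have h1 := (hasDerivAt_id w).const_mul ((1 + A2) ^ 2)
  have h2 := (Real.hasDerivAt_rpow_const (p := (2 - α) / 2) (Or.inl hw.ne')).const_mul
    (2 * (1 + A2) * c2)
  have h3 := (Real.hasDerivAt_rpow_const (p := 1 - α) (Or.inl hw.ne')).const_mul (c2 ^ 2)
  have h4 := (((Real.hasDerivAt_rpow_const (p := (1 - α) / 2)
    (Or.inl hw.ne')).const_mul c1).const_add (1 / τM)).pow 2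
  have H := ((h1.add h2).add h3).add h4
  unfold Gden Gdd
  refine H.congr_deriv ?_
  push_cast
  ring

lemma Gp_hasDeriv {τM A2 c1 c2 α w : ℝ} (hw : 0 < w)
    (hden : Gden τM A2 c1 c2 α w ≠ 0) :
    HasDerivAt (Gfun τM A2 c1 c2 α) (Gp τM A2 c1 c2 α w) w := by
  unfold Gfun Gp
  exact (Gnum_hasDeriv hw).div (Gden_hasDeriv hw) hden

/- power-product facts -/

lemma rpow_fact1 {w : ℝ} (hw : 0 < w) {a b c : ℝ} (h : a + b = c) :
    w ^ a * w ^ b = w ^ c := by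
  rw [← Real.rpow_add hw, h]

lemma rpow_fact_one {w : ℝ} (hw : 0 < w) {a b : ℝ} (h : a + b = 1) :
    w ^ a * w ^ b = w := by
  rw [← Real.rpow_add hw, h, Real.rpow_one]

lemma rpow_fact_zero {w : ℝ} (hw : 0 < w) {a b : ℝ} (h : a + b = 0) :
    w ^ a * w ^ b = 1 := by
  rw [← Real.rpow_add hw, h, Real.rpow_zero]

lemma rpow_mul_fact {w : ℝ} (hw : 0 < w) (e : ℝ) : w * w ^ (e - 1) = w ^ e := by
  rw [mul_comm, ← Real.rpow_add_one hw.ne']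
  congr 1
  ring

/- Identity I3 : 2 w Gp w = F3 w for w > 0 -/
lemma idF3 {τM A2 c1 c2 α : ℝ} {w : ℝ} (hw : 0 < w) :
    2 * w * Gp τM A2 c1 c2 α w = F3 τM A2 c1 c2 α w := by
  have hm := rpow_mul_fact hw
  have e1 : w * Gnd c1 α w = -(c1 * ((1 - α) / 2 * w ^ ((1 - α) / 2))) := by
    unfold Gnd
    linear_combination (-(c1 * ((1 - α) / 2))) * hm ((1 - α) / 2)
  have e2 : w * Gdd τM A2 c1 c2 α w = (1 + A2) ^ 2 * w
      + 2 * (1 + A2) * c2 * ((2 - α) / 2 * w ^ ((2 - α) / 2))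
      + c2 ^ 2 * ((1 - α) * w ^ (1 - α))
      + 2 * (1 / τM + c1 * w ^ ((1 - α) / 2)) * (c1 * ((1 - α) / 2 * w ^ ((1 - α) / 2))) := by
    unfold Gdd
    linear_combination (2 * (1 + A2) * c2 * ((2 - α) / 2)) * hm ((2 - α) / 2)
      + (c2 ^ 2 * (1 - α)) * hm (1 - α)
      + (2 * (1 / τM + c1 * w ^ ((1 - α) / 2)) * (c1 * ((1 - α) / 2))) * hm ((1 - α) / 2)
  calc 2 * w * Gp τM A2 c1 c2 α w
      = 2 * ((w * Gnd c1 α w) * Gden τM A2 c1 c2 α w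
          - Gnum τM c1 α w * (w * Gdd τM A2 c1 c2 α w)) / (Gden τM A2 c1 c2 α w) ^ 2 := by
        unfold Gp; ring
    _ = F3 τM A2 c1 c2 α w := by rw [e1, e2]; unfold F3; rfl

/- Identity I1 : Gfun w + τM = F1 w * w^((1-α)/2) for w > 0 -/
lemma idF1 {τM A2 c1 c2 α : ℝ} (hτM : 0 < τM) (hA2 : 0 < A2) (hc1 : 0 ≤ c1) (hc2 : 0 ≤ c2)
    {w : ℝ} (hw : 0 < w) :
    Gfun τM A2 c1 c2 α w + τM = F1 τM A2 c1 c2 α w * w ^ ((1 - α) / 2) := by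
  have hden : Gden τM A2 c1 c2 α w ≠ 0 := (Gden_pos hτM hA2 hc1 hc2 hw.le).ne'
  have f1 : w ^ ((1 + α) / 2) * w ^ ((1 - α) / 2) = w := rpow_fact_one hw (by ring)
  have f2 : w ^ ((1:ℝ)/2) * w ^ ((1 - α) / 2) = w ^ ((2 - α) / 2) := rpow_fact1 hw (by ring)
  have f3 : w ^ ((1 - α) / 2) * w ^ ((1 - α) / 2) = w ^ (1 - α) := rpow_fact1 hw (by ring)
  have key : Gnum τM c1 α w + τM * Gden τM A2 c1 c2 α w
      = (c1 + τM * (1 + A2) ^ 2 * w ^ ((1 + α) / 2) + 2 * τM * (1 + A2) * c2 * w ^ ((1:ℝ)/2)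
        + τM * (c1 ^ 2 + c2 ^ 2) * w ^ ((1 - α) / 2)) * w ^ ((1 - α) / 2) := by
    have hττ : τM * τM⁻¹ = 1 := mul_inv_cancel₀ hτM.ne'
    unfold Gnum Gden
    linear_combination (-(τM * (1 + A2) ^ 2)) * f1 + (-(2 * τM * (1 + A2) * c2)) * f2
      + (-(τM * c2 ^ 2)) * f3 + (2 * c1 * w ^ ((1 - α) / 2) + τM⁻¹) * hττ
  calc Gfun τM A2 c1 c2 α w + τM
      = (Gnum τM c1 α w + τM * Gden τM A2 c1 c2 α w) / Gden τM A2 c1 c2 α w := by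
        unfold Gfun; field_simp
    _ = F1 τM A2 c1 c2 α w * w ^ ((1 - α) / 2) := by rw [key]; unfold F1; ring

/- Identity I2 : 2 w Gp w = F2 w * w^((1-α)/2) for w > 0 -/
lemma idF2 {τM A2 c1 c2 α : ℝ} {w : ℝ} (hw : 0 < w) :
    2 * w * Gp τM A2 c1 c2 α w = F2 τM A2 c1 c2 α w * w ^ ((1 - α) / 2) := by
  have f1 : w ^ ((1 + α) / 2) * w ^ ((1 - α) / 2) = w := rpow_fact_one hw (by ring)
  have f4 : w ^ ((1 + α) / 2) * w ^ ((1 - α) / 2 - 1) = 1 := rpow_fact_zero hw (by ring)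
  have f5 : w ^ ((1 + α) / 2) * w ^ ((2 - α) / 2 - 1) = w ^ ((1:ℝ)/2) := rpow_fact1 hw (by ring)
  have f6 : w ^ ((1 + α) / 2) * w ^ (1 - α - 1) = w ^ ((1 - α) / 2) := rpow_fact1 hw (by ring)
  have g1 : w ^ ((1 + α) / 2) * Gnd c1 α w = -(c1 * ((1 - α) / 2)) := by
    unfold Gnd
    linear_combination (-(c1 * ((1 - α) / 2))) * f4
  have g2 : w ^ ((1 + α) / 2) * Gdd τM A2 c1 c2 α w
      = (1 + A2) ^ 2 * w ^ ((1 + α) / 2)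
        + 2 * (1 + A2) * c2 * ((2 - α) / 2 * w ^ ((1:ℝ)/2))
        + c2 ^ 2 * ((1 - α) * w ^ ((1 - α) / 2))
        + 2 * (1 / τM + c1 * w ^ ((1 - α) / 2)) * (c1 * ((1 - α) / 2)) := by
    unfold Gdd
    linear_combination (2 * (1 + A2) * c2 * ((2 - α) / 2)) * f5
      + (c2 ^ 2 * (1 - α)) * f6
      + (2 * (1 / τM + c1 * w ^ ((1 - α) / 2)) * (c1 * ((1 - α) / 2))) * f4
  calc 2 * w * Gp τM A2 c1 c2 α w
      = 2 * (((w ^ ((1 + α) / 2) * Gnd c1 α w) * Gden τM A2 c1 c2 α w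
          - Gnum τM c1 α w * (w ^ ((1 + α) / 2) * Gdd τM A2 c1 c2 α w)) * w ^ ((1 - α) / 2))
          / (Gden τM A2 c1 c2 α w) ^ 2 := by
        unfold Gp
        linear_combination ((2 * (Gnd c1 α w * Gden τM A2 c1 c2 α w
          - Gnum τM c1 α w * Gdd τM A2 c1 c2 α w)) / (Gden τM A2 c1 c2 α w) ^ 2) * f1.symm
    _ = F2 τM A2 c1 c2 α w * w ^ ((1 - α) / 2) := by rw [g1, g2]; unfold F2; ring

/- Values at 0 -/
lemma F1_zero {τM A2 c1 c2 α : ℝ} (hτM : 0 < τM) (hα1 : α < 1) (hα0 : 0 < α) :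
    F1 τM A2 c1 c2 α 0 = c1 * τM ^ 2 := by
  unfold F1
  rw [Gden_zero hα1 hα0,
    Real.zero_rpow (by linarith : (0:ℝ) < (1 + α) / 2).ne',
    Real.zero_rpow (by norm_num : ((1:ℝ)/2) ≠ 0),
    Real.zero_rpow (by linarith : (0:ℝ) < (1 - α) / 2).ne']
  field_simp
  ring

lemma F2_zero {τM A2 c1 c2 α : ℝ} (hτM : 0 < τM) (hα1 : α < 1) (hα0 : 0 < α) :
    F2 τM A2 c1 c2 α 0 = c1 * (1 - α) * τM ^ 2 := by
  unfold F2
  rw [Gden_zero hα1 hα0, Gnum_zero hα1,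
    Real.zero_rpow (by linarith : (0:ℝ) < (1 + α) / 2).ne',
    Real.zero_rpow (by norm_num : ((1:ℝ)/2) ≠ 0),
    Real.zero_rpow (by linarith : (0:ℝ) < (1 - α) / 2).ne']
  field_simp
  ring

lemma F3_zero {τM A2 c1 c2 α : ℝ} (hτM : 0 < τM) (hα1 : α < 1) (hα0 : 0 < α) :
    F3 τM A2 c1 c2 α 0 = 0 := by
  unfold F3
  rw [Gden_zero hα1 hα0, Gnum_zero hα1,
    Real.zero_rpow (by linarith : (0:ℝ) < (2 - α) / 2).ne',
    Real.zero_rpow (by linarith : (0:ℝ) < 1 - α).ne',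
    Real.zero_rpow (by linarith : (0:ℝ) < (1 - α) / 2).ne']
  field_simp
  ring

/- Continuity at 0 -/
lemma F1_cont {τM A2 c1 c2 α : ℝ} (hτM : 0 < τM) (hA2 : 0 < A2) (hc1 : 0 ≤ c1) (hc2 : 0 ≤ c2)
    (hα1 : α < 1) (hα0 : 0 < α) : ContinuousAt (F1 τM A2 c1 c2 α) 0 := by
  have hden : Gden τM A2 c1 c2 α 0 ≠ 0 := (Gden_pos hτM hA2 hc1 hc2 le_rfl).ne'
  have hn : Continuous fun w : ℝ => c1 + τM * (1 + A2) ^ 2 * w ^ ((1 + α) / 2)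
      + 2 * τM * (1 + A2) * c2 * w ^ ((1:ℝ)/2) + τM * (c1 ^ 2 + c2 ^ 2) * w ^ ((1 - α) / 2) :=
    ((continuous_const.add (continuous_const.mul
      (cont_rpow (by linarith : (0:ℝ) ≤ (1 + α) / 2)))).add
      (continuous_const.mul (cont_rpow (by norm_num : (0:ℝ) ≤ 1/2)))).add
      (continuous_const.mul (cont_rpow (by linarith : (0:ℝ) ≤ (1 - α) / 2)))
  exact hn.continuousAt.div (Gden_cont hα1 hα0).continuousAt hden

lemma F2_cont {τM A2 c1 c2 α : ℝ} (hτM : 0 < τM) (hA2 : 0 < A2) (hc1 : 0 ≤ c1) (hc2 : 0 ≤ c2)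
    (hα1 : α < 1) (hα0 : 0 < α) : ContinuousAt (F2 τM A2 c1 c2 α) 0 := by
  have hden : (Gden τM A2 c1 c2 α 0) ^ 2 ≠ 0 :=
    pow_ne_zero 2 (Gden_pos hτM hA2 hc1 hc2 le_rfl).ne'
  have hin : Continuous fun w : ℝ => (1 + A2) ^ 2 * w ^ ((1 + α) / 2)
      + 2 * (1 + A2) * c2 * ((2 - α) / 2 * w ^ ((1:ℝ)/2))
      + c2 ^ 2 * ((1 - α) * w ^ ((1 - α) / 2))
      + 2 * (1 / τM + c1 * w ^ ((1 - α) / 2)) * (c1 * ((1 - α) / 2)) :=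
    (((continuous_const.mul (cont_rpow (by linarith : (0:ℝ) ≤ (1 + α) / 2))).add
      (continuous_const.mul (continuous_const.mul (cont_rpow (by norm_num : (0:ℝ) ≤ 1/2))))).add
      (continuous_const.mul (continuous_const.mul
        (cont_rpow (by linarith : (0:ℝ) ≤ (1 - α) / 2))))).add
      ((continuous_const.mul (continuous_const.add (continuous_const.mul
        (cont_rpow (by linarith : (0:ℝ) ≤ (1 - α) / 2))))).mul continuous_const)
  have hn : Continuous fun w : ℝ => 2 * (-(c1 * ((1 - α) / 2)) * Gden τM A2 c1 c2 α w
      - Gnum τM c1 α w * ((1 + A2) ^ 2 * w ^ ((1 + α) / 2)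
        + 2 * (1 + A2) * c2 * ((2 - α) / 2 * w ^ ((1:ℝ)/2))
        + c2 ^ 2 * ((1 - α) * w ^ ((1 - α) / 2))
        + 2 * (1 / τM + c1 * w ^ ((1 - α) / 2)) * (c1 * ((1 - α) / 2)))) :=
    continuous_const.mul ((continuous_const.mul (Gden_cont hα1 hα0)).sub
      ((Gnum_cont hα1).mul hin))
  exact hn.continuousAt.div ((Gden_cont hα1 hα0).pow 2).continuousAt hden

lemma F3_cont {τM A2 c1 c2 α : ℝ} (hτM : 0 < τM) (hA2 : 0 < A2) (hc1 : 0 ≤ c1) (hc2 : 0 ≤ c2)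
    (hα1 : α < 1) (hα0 : 0 < α) : ContinuousAt (F3 τM A2 c1 c2 α) 0 := by
  have hden : (Gden τM A2 c1 c2 α 0) ^ 2 ≠ 0 :=
    pow_ne_zero 2 (Gden_pos hτM hA2 hc1 hc2 le_rfl).ne'
  have hin : Continuous fun w : ℝ => (1 + A2) ^ 2 * w
      + 2 * (1 + A2) * c2 * ((2 - α) / 2 * w ^ ((2 - α) / 2))
      + c2 ^ 2 * ((1 - α) * w ^ (1 - α))
      + 2 * (1 / τM + c1 * w ^ ((1 - α) / 2)) * (c1 * ((1 - α) / 2 * w ^ ((1 - α) / 2))) :=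
    (((continuous_const.mul continuous_id).add
      (continuous_const.mul (continuous_const.mul
        (cont_rpow (by linarith : (0:ℝ) ≤ (2 - α) / 2))))).add
      (continuous_const.mul (continuous_const.mul
        (cont_rpow (by linarith : (0:ℝ) ≤ 1 - α))))).add
      ((continuous_const.mul (continuous_const.add (continuous_const.mul
        (cont_rpow (by linarith : (0:ℝ) ≤ (1 - α) / 2))))).mul
        (continuous_const.mul (continuous_const.mul
          (cont_rpow (by linarith : (0:ℝ) ≤ (1 - α) / 2)))))
  have hn : Continuous fun w : ℝ =>
      2 * (-(c1 * ((1 - α) / 2 * w ^ ((1 - α) / 2))) * Gden τM A2 c1 c2 α w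
        - Gnum τM c1 α w * ((1 + A2) ^ 2 * w
          + 2 * (1 + A2) * c2 * ((2 - α) / 2 * w ^ ((2 - α) / 2))
          + c2 ^ 2 * ((1 - α) * w ^ (1 - α))
          + 2 * (1 / τM + c1 * w ^ ((1 - α) / 2)) * (c1 * ((1 - α) / 2 * w ^ ((1 - α) / 2))))) :=
    continuous_const.mul ((((continuous_const.mul (continuous_const.mul
      (cont_rpow (by linarith : (0:ℝ) ≤ (1 - α) / 2)))).neg).mul
      (Gden_cont hα1 hα0)).sub ((Gnum_cont hα1).mul hin))
  exact hn.continuousAt.div ((Gden_cont hα1 hα0).pow 2).continuousAt hden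
lemma nfmeF_eq (τA τM A2 α : ℝ) (hτM : 0 < τM) (hα0 : 0 < α) (hα1 : α < 1)
    (hc1 : 0 ≤ τA ^ (-α) * Real.sin (α * Real.pi / 2) * Real.Gamma (α + 1)) (x : ℝ) :
    nfmeF τA τM A2 α x
      = x * Gfun τM A2 (τA ^ (-α) * Real.sin (α * Real.pi / 2) * Real.Gamma (α + 1))
          (τA ^ (-α) * Real.cos (α * Real.pi / 2) * Real.Gamma (α + 1)) α (x ^ 2) := by
  rcases eq_or_ne x 0 with rfl | hx
  · simp [nfmeF, Real.sign_zero]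
  have ha : 0 < |x| := abs_pos.mpr hx
  have hx2 : (x:ℝ) ^ 2 = |x| ^ 2 := (sq_abs x).symm
  have e1 : ((x:ℝ) ^ 2) ^ ((1 - α) / 2) = |x| ^ (1 - α) := by
    rw [hx2, ← Real.rpow_natCast |x| 2, ← Real.rpow_mul (abs_nonneg x)]
    congr 1; push_cast; ring
  have e2 : ((x:ℝ) ^ 2) ^ ((2 - α) / 2) = |x| * |x| ^ (1 - α) := by
    rw [hx2, ← Real.rpow_natCast |x| 2, ← Real.rpow_mul (abs_nonneg x),
      show ((2:ℕ):ℝ) * ((2 - α) / 2) = 1 + (1 - α) by push_cast; ring,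
      Real.rpow_add ha, Real.rpow_one]
  have e3 : ((x:ℝ) ^ 2) ^ (1 - α) = |x| ^ (1 - α) * |x| ^ (1 - α) := by
    rw [hx2, ← Real.rpow_natCast |x| 2, ← Real.rpow_mul (abs_nonneg x),
      show ((2:ℕ):ℝ) * (1 - α) = (1 - α) + (1 - α) by push_cast; ring,
      Real.rpow_add ha]
  have hsign : |x| * Real.sign x = x := by
    rcases hx.lt_or_gt with h | h
    · rw [abs_of_neg h, Real.sign_of_neg h]; ring
    · rw [abs_of_pos h, Real.sign_of_pos h]; ring
  have hD : 0 < (Rfun τA α |x| + A2 * |x|) ^ 2 + (Ifun τA τM α |x|) ^ 2 := by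
    have hI : Ifun τA τM α |x| < 0 := by
      have h1 : 0 ≤ |x| ^ (1 - α) * (τA ^ (-α) * Real.sin (α * Real.pi / 2) * Real.Gamma (α + 1)) :=
        mul_nonneg (Real.rpow_nonneg (abs_nonneg x) (1 - α)) hc1
      have h2 : 0 < 1 / τM := by positivity
      have h3 : Ifun τA τM α |x| = -(1 / τM)
          - |x| ^ (1 - α) * (τA ^ (-α) * Real.sin (α * Real.pi / 2) * Real.Gamma (α + 1)) := by
        unfold Ifun; ring
      rw [h3]; linarith
    have h4 := sq_nonneg (Rfun τA α |x| + A2 * |x|)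
    have h5 : 0 < (Ifun τA τM α |x|) ^ 2 := by
      have := neg_pos.mpr hI
      nlinarith
    linarith
  unfold nfmeF P2 Gfun Gnum Gden
  rw [e1, e2, e3, hx2]
  rw [div_mul_eq_mul_div, mul_assoc, hsign, mul_div_assoc']
  congr 1
  · unfold Ifun; ring
  · unfold Rfun Ifun; ring

/- HasDerivAt of x ↦ x * Gfun (x²) away from 0 -/
lemma main_hasDeriv {τM A2 c1 c2 α : ℝ} (hτM : 0 < τM) (hA2 : 0 < A2) (hc1 : 0 ≤ c1)
    (hc2 : 0 ≤ c2) {x : ℝ} (hx : x ≠ 0) :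
    HasDerivAt (fun x : ℝ => x * Gfun τM A2 c1 c2 α (x ^ 2))
      (Gfun τM A2 c1 c2 α (x ^ 2) + x * (Gp τM A2 c1 c2 α (x ^ 2) * (2 * x))) x := by
  have hw : 0 < x ^ 2 := by positivity
  have hden : Gden τM A2 c1 c2 α (x ^ 2) ≠ 0 := (Gden_pos hτM hA2 hc1 hc2 hw.le).ne'
  have hx2 : HasDerivAt (fun y : ℝ => y ^ 2) (2 * x) x := by
    simpa using hasDerivAt_pow 2 x
  have h := HasDerivAt.comp (h₂ := Gfun τM A2 c1 c2 α) (h := fun y : ℝ => y ^ 2) x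
    (Gp_hasDeriv hw hden) hx2
  have h2 := (hasDerivAt_id x).mul h
  exact h2.congr_deriv (by simp)

lemma main_hasDeriv0 {τM A2 c1 c2 α : ℝ} (hτM : 0 < τM) (hA2 : 0 < A2) (hc1 : 0 ≤ c1)
    (hc2 : 0 ≤ c2) (hα0 : 0 < α) (hα1 : α < 1) :
    HasDerivAt (fun x : ℝ => x * Gfun τM A2 c1 c2 α (x ^ 2)) (-τM) 0 := by
  have hden0 : Gden τM A2 c1 c2 α 0 ≠ 0 := (Gden_pos hτM hA2 hc1 hc2 le_rfl).ne'
  rw [hasDerivAt_iff_tendsto_slope]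
  have hc : ContinuousAt (fun x : ℝ => Gfun τM A2 c1 c2 α (x ^ 2)) 0 := by
    have h1 : ContinuousAt (Gfun τM A2 c1 c2 α) ((0:ℝ) ^ 2) := by
      show ContinuousAt (fun w => Gnum τM c1 α w / Gden τM A2 c1 c2 α w) ((0:ℝ) ^ 2)
      apply (Gnum_cont hα1).continuousAt.div (Gden_cont hα1 hα0).continuousAt
      simpa using hden0
    exact ContinuousAt.comp (x := (0:ℝ)) (g := Gfun τM A2 c1 c2 α)
      (f := fun y : ℝ => y ^ 2) h1 (continuous_pow 2).continuousAt
  have hT : Tendsto (fun x : ℝ => Gfun τM A2 c1 c2 α (x ^ 2)) (𝓝[≠] 0) (𝓝 (-τM)) := by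
    have := hc.tendsto.mono_left (nhdsWithin_le_nhds (s := {(0:ℝ)}ᶜ))
    simpa [Gfun_zero hτM hα1 hα0] using this
  apply hT.congr'
  filter_upwards [self_mem_nhdsWithin] with y hy
  have hy' : (y : ℝ) ≠ 0 := hy
  simp only [slope_def_field]
  field_simp
  ring

lemma nfme_master (τM A2 c1 c2 α : ℝ) (hτM : 0 < τM) (hA2 : 0 < A2) (hc1 : 0 < c1)
    (hc2 : 0 < c2) (hα0 : 0 < α) (hα1 : α < 1) :
    ContDiff ℝ 1 (fun x : ℝ => x * Gfun τM A2 c1 c2 α (x ^ 2)) ∧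
      ¬ DifferentiableAt ℝ (deriv (fun x : ℝ => x * Gfun τM A2 c1 c2 α (x ^ 2))) 0 := by
  set f : ℝ → ℝ := fun x : ℝ => x * Gfun τM A2 c1 c2 α (x ^ 2) with hfdef
  have hD : ∀ x : ℝ, x ≠ 0 → HasDerivAt f
      (Gfun τM A2 c1 c2 α (x ^ 2) + x * (Gp τM A2 c1 c2 α (x ^ 2) * (2 * x))) x :=
    fun x hx => main_hasDeriv hτM hA2 hc1.le hc2.le hx
  have hD0 : HasDerivAt f (-τM) 0 := main_hasDeriv0 hτM hA2 hc1.le hc2.le hα0 hα1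
  have hdiff : Differentiable ℝ f := by
    intro x
    rcases eq_or_ne x 0 with rfl | hx
    · exact hD0.differentiableAt
    · exact (hD x hx).differentiableAt
  have hder0 : deriv f 0 = -τM := hD0.deriv
  have hder : ∀ x : ℝ, x ≠ 0 → deriv f x
      = Gfun τM A2 c1 c2 α (x ^ 2) + x * (Gp τM A2 c1 c2 α (x ^ 2) * (2 * x)) :=
    fun x hx => (hD x hx).deriv
  have hden0 : Gden τM A2 c1 c2 α 0 ≠ 0 := (Gden_pos hτM hA2 hc1.le hc2.le le_rfl).ne'
  -- Tendsto of the first part (full neighborhood)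
  have hT1 : Tendsto (fun x : ℝ => Gfun τM A2 c1 c2 α (x ^ 2)) (𝓝 0) (𝓝 (-τM)) := by
    have h1 : ContinuousAt (Gfun τM A2 c1 c2 α) ((0:ℝ) ^ 2) := by
      show ContinuousAt (fun w => Gnum τM c1 α w / Gden τM A2 c1 c2 α w) ((0:ℝ) ^ 2)
      apply (Gnum_cont hα1).continuousAt.div (Gden_cont hα1 hα0).continuousAt
      simpa using hden0
    have hc := ContinuousAt.comp (x := (0:ℝ)) (g := Gfun τM A2 c1 c2 α)
      (f := fun y : ℝ => y ^ 2) h1 (continuous_pow 2).continuousAt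
    simpa [Gfun_zero hτM hα1 hα0, Function.comp_def] using hc.tendsto
  -- x ↦ x² maps 𝓝[≠]0 to 𝓝[>]0
  have hsq : Tendsto (fun x : ℝ => x ^ 2) (𝓝[≠] (0:ℝ)) (𝓝[>] (0:ℝ)) := by
    rw [tendsto_nhdsWithin_iff]
    constructor
    · have := ((continuous_pow 2).tendsto (0:ℝ)).mono_left
        (nhdsWithin_le_nhds (s := {(0:ℝ)}ᶜ))
      simpa using this
    · filter_upwards [self_mem_nhdsWithin] with y hy
      exact lt_of_le_of_ne (sq_nonneg y) (Ne.symm (pow_ne_zero 2 hy))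
  -- Tendsto of the second part
  have hT2 : Tendsto (fun x : ℝ => x * (Gp τM A2 c1 c2 α (x ^ 2) * (2 * x)))
      (𝓝[≠] (0:ℝ)) (𝓝 0) := by
    have hF3T : Tendsto (F3 τM A2 c1 c2 α) (𝓝[>] (0:ℝ)) (𝓝 0) := by
      have := (F3_cont hτM hA2 hc1.le hc2.le hα1 hα0).tendsto.mono_left
        (nhdsWithin_le_nhds (s := Ioi (0:ℝ)))
      rwa [F3_zero hτM hα1 hα0] at this
    apply (hF3T.comp hsq).congr'
    filter_upwards [self_mem_nhdsWithin] with y hy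
    have hw : 0 < y ^ 2 := lt_of_le_of_ne (sq_nonneg y) (Ne.symm (pow_ne_zero 2 hy))
    have h3 := idF3 (τM := τM) (A2 := A2) (c1 := c1) (c2 := c2) (α := α) hw
    simp only [Function.comp]
    linear_combination -h3
  -- continuity of the derivative
  have hcont : Continuous (deriv f) := by
    rw [continuous_iff_continuousAt]
    intro x₀
    rcases eq_or_ne x₀ 0 with rfl | hx₀
    · rw [ContinuousAt, hder0, ← nhdsNE_sup_pure 0, tendsto_sup]
      constructor
      · have hev : (fun x : ℝ => Gfun τM A2 c1 c2 α (x ^ 2)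
            + x * (Gp τM A2 c1 c2 α (x ^ 2) * (2 * x))) =ᶠ[𝓝[≠] (0:ℝ)] deriv f := by
          filter_upwards [self_mem_nhdsWithin] with y hy
          exact (hder y hy).symm
        have := (hT1.mono_left (nhdsWithin_le_nhds (s := {(0:ℝ)}ᶜ))).add hT2
        rw [add_zero] at this
        exact this.congr' hev
      · have : Tendsto (deriv f) (pure 0) (𝓝 (deriv f 0)) := tendsto_pure_nhds _ _
        rwa [hder0] at this
    · have hw : 0 < x₀ ^ 2 := lt_of_le_of_ne (sq_nonneg x₀) (Ne.symm (pow_ne_zero 2 hx₀))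
      have hwne : (x₀ : ℝ) ^ 2 ≠ 0 := hw.ne'
      have hdenne : Gden τM A2 c1 c2 α (x₀ ^ 2) ≠ 0 :=
        (Gden_pos hτM hA2 hc1.le hc2.le hw.le).ne'
      have hrp : ∀ e : ℝ, ContinuousAt (fun w : ℝ => w ^ e) (x₀ ^ 2) :=
        fun e => Real.continuousAt_rpow_const _ e (Or.inl hwne)
      have hnum : ContinuousAt (Gnum τM c1 α) (x₀ ^ 2) := by
        unfold Gnum
        exact continuousAt_const.sub (continuousAt_const.mul (hrp _))
      have hdenc : ContinuousAt (Gden τM A2 c1 c2 α) (x₀ ^ 2) :=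
        (Gden_cont hα1 hα0).continuousAt
      have hnd : ContinuousAt (Gnd c1 α) (x₀ ^ 2) := by
        unfold Gnd
        exact (continuousAt_const.mul (continuousAt_const.mul (hrp _))).neg
      have hdd : ContinuousAt (Gdd τM A2 c1 c2 α) (x₀ ^ 2) := by
        unfold Gdd
        exact ((continuousAt_const.add (continuousAt_const.mul
          (continuousAt_const.mul (hrp _)))).add
          (continuousAt_const.mul (continuousAt_const.mul (hrp _)))).add
          ((continuousAt_const.mul (continuousAt_const.add
            (continuousAt_const.mul (hrp _)))).mul
            (continuousAt_const.mul (continuousAt_const.mul (hrp _))))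
      have hGp : ContinuousAt (Gp τM A2 c1 c2 α) (x₀ ^ 2) := by
        unfold Gp
        exact ((hnd.mul hdenc).sub (hnum.mul hdd)).div (hdenc.pow 2) (pow_ne_zero 2 hdenne)
      have hGf : ContinuousAt (Gfun τM A2 c1 c2 α) (x₀ ^ 2) := by
        show ContinuousAt (fun w => Gnum τM c1 α w / Gden τM A2 c1 c2 α w) (x₀ ^ 2)
        exact hnum.div hdenc hdenne
      have hsqc : ContinuousAt (fun y : ℝ => y ^ 2) x₀ := (continuous_pow 2).continuousAt
      have hV : ContinuousAt (fun x : ℝ => Gfun τM A2 c1 c2 α (x ^ 2)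
          + x * (Gp τM A2 c1 c2 α (x ^ 2) * (2 * x))) x₀ :=
        (ContinuousAt.comp (x := x₀) (g := Gfun τM A2 c1 c2 α) (f := fun y : ℝ => y ^ 2)
          hGf hsqc).add (continuousAt_id.mul
          ((ContinuousAt.comp (x := x₀) (g := Gp τM A2 c1 c2 α) (f := fun y : ℝ => y ^ 2)
            hGp hsqc).mul (continuousAt_const.mul continuousAt_id)))
      apply hV.congr
      filter_upwards [eventually_ne_nhds hx₀] with y hy
      exact ((hder y hy)).symm
  refine ⟨contDiff_one_iff_deriv.mpr ⟨hdiff, hcont⟩, ?_⟩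
  -- the second derivative does not exist at 0
  intro hdiff2
  -- f is odd, hence deriv f is even
  have hodd : ∀ x : ℝ, f (-x) = -f x := by
    intro x
    show (-x) * Gfun τM A2 c1 c2 α ((-x) ^ 2) = -(x * Gfun τM A2 c1 c2 α (x ^ 2))
    rw [neg_sq]; ring
  have heven : ∀ x : ℝ, deriv f (-x) = deriv f x := by
    intro x
    have h1 : (fun y : ℝ => f (-y)) = fun y => -f y := funext hodd
    have h2 := deriv_comp_neg (f := f) (x := x)
    rw [h1, deriv.fun_neg] at h2
    linarith
  have hg0 : deriv (deriv f) 0 = 0 := by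
    have h2 := deriv_comp_neg (f := deriv f) (x := (0:ℝ))
    have h3 : (fun x : ℝ => deriv f (-x)) = deriv f := funext heven
    rw [h3, neg_zero] at h2
    linarith
  have hs : Tendsto (slope (deriv f) 0) (𝓝[≠] (0:ℝ)) (𝓝 0) := by
    have h4 := hdiff2.hasDerivAt
    rw [hg0] at h4
    exact hasDerivAt_iff_tendsto_slope.mp h4
  have hs' : Tendsto (slope (deriv f) 0) (𝓝[>] (0:ℝ)) (𝓝 0) :=
    hs.mono_left (nhdsWithin_mono 0 fun y hy => ne_of_gt hy)
  -- identity for the slope on (0, ∞)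
  have hid : slope (deriv f) 0 =ᶠ[𝓝[>] (0:ℝ)]
      fun x => (F1 τM A2 c1 c2 α (x ^ 2) + F2 τM A2 c1 c2 α (x ^ 2)) * (x ^ α)⁻¹ := by
    filter_upwards [self_mem_nhdsWithin] with x hx
    replace hx : (0:ℝ) < x := hx
    have hw : 0 < x ^ 2 := by positivity
    have hI1 := idF1 (α := α) hτM hA2 hc1.le hc2.le (w := x ^ 2) hw
    have hI2 := idF2 (τM := τM) (A2 := A2) (c1 := c1) (c2 := c2) (α := α) (w := x ^ 2) hw
    have ht : ((x:ℝ) ^ 2) ^ ((1 - α) / 2) = x ^ (1 - α) := by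
      rw [← Real.rpow_natCast x 2, ← Real.rpow_mul hx.le]
      congr 1; push_cast; ring
    have hxp : x ^ (1 - α) / x = (x ^ α)⁻¹ := by
      rw [show (1:ℝ) - α = -α + 1 by ring, Real.rpow_add hx, Real.rpow_one,
        Real.rpow_neg hx.le]
      exact mul_div_cancel_right₀ _ hx.ne'
    have hslope : slope (deriv f) 0 x = (deriv f x - deriv f 0) / x := by
      rw [slope_def_field]; ring_nf
    rw [hslope, hder x hx.ne', hder0]
    calc (Gfun τM A2 c1 c2 α (x ^ 2) + x * (Gp τM A2 c1 c2 α (x ^ 2) * (2 * x)) - -τM) / x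
        = ((Gfun τM A2 c1 c2 α (x ^ 2) + τM) + 2 * x ^ 2 * Gp τM A2 c1 c2 α (x ^ 2)) / x := by
          ring
      _ = ((F1 τM A2 c1 c2 α (x ^ 2) + F2 τM A2 c1 c2 α (x ^ 2))
            * ((x ^ 2) ^ ((1 - α) / 2))) / x := by rw [hI1, hI2]; ring
      _ = (F1 τM A2 c1 c2 α (x ^ 2) + F2 τM A2 c1 c2 α (x ^ 2)) * (x ^ (1 - α) / x) := by
          rw [ht]; ring
      _ = (F1 τM A2 c1 c2 α (x ^ 2) + F2 τM A2 c1 c2 α (x ^ 2)) * (x ^ α)⁻¹ := by rw [hxp]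
  -- limit of F1 + F2 along x² is positive
  have hF12 : Tendsto (fun x : ℝ => F1 τM A2 c1 c2 α (x ^ 2) + F2 τM A2 c1 c2 α (x ^ 2))
      (𝓝[>] (0:ℝ)) (𝓝 (c1 * τM ^ 2 + c1 * (1 - α) * τM ^ 2)) := by
    have h1 := (F1_cont hτM hA2 hc1.le hc2.le hα1 hα0).tendsto
    have h2 := (F2_cont hτM hA2 hc1.le hc2.le hα1 hα0).tendsto
    rw [F1_zero hτM hα1 hα0] at h1
    rw [F2_zero hτM hα1 hα0] at h2
    have hsq0 : Tendsto (fun x : ℝ => x ^ 2) (𝓝[>] (0:ℝ)) (𝓝 ((0:ℝ))) := by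
      have := ((continuous_pow 2).tendsto (0:ℝ)).mono_left (nhdsWithin_le_nhds (s := Ioi (0:ℝ)))
      simpa using this
    exact (h1.comp hsq0).add (h2.comp hsq0)
  have hLpos : 0 < c1 * τM ^ 2 + c1 * (1 - α) * τM ^ 2 := by
    nlinarith [mul_pos (mul_pos hc1 (pow_pos hτM 2)) (show (0:ℝ) < 2 - α by linarith)]
  have hinv : Tendsto (fun x : ℝ => (x ^ α)⁻¹) (𝓝[>] (0:ℝ)) atTop := by
    apply Filter.Tendsto.inv_tendsto_nhdsGT_zero
    rw [tendsto_nhdsWithin_iff]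
    constructor
    · have : ContinuousAt (fun x : ℝ => x ^ α) 0 :=
        Real.continuousAt_rpow_const 0 α (Or.inr hα0.le)
      have h := this.tendsto.mono_left (nhdsWithin_le_nhds (s := Ioi (0:ℝ)))
      simpa [Real.zero_rpow hα0.ne'] using h
    · filter_upwards [self_mem_nhdsWithin] with y hy
      exact Real.rpow_pos_of_pos hy α
  have hTop : Tendsto (fun x : ℝ => (F1 τM A2 c1 c2 α (x ^ 2) + F2 τM A2 c1 c2 α (x ^ 2))
      * (x ^ α)⁻¹) (𝓝[>] (0:ℝ)) atTop := hF12.pos_mul_atTop hLpos hinv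
  have : Tendsto (slope (deriv f) 0) (𝓝[>] (0:ℝ)) atTop := hTop.congr' hid.symm
  exact not_tendsto_nhds_of_tendsto_atTop this 0 hs'

/-- The NFME dissipation function f is not twice differentiable at x = 0: its
derivative f′ (which exists and is continuous on ℝ) is not differentiable at 0. -/
theorem nfmeF_not_twice_differentiable (τA τM A2 α : ℝ) (hτA : 0 < τA) (hτM : 0 < τM)
    (hA2 : 0 < A2) (hα0 : 0 < α) (hα1 : α < 1) :
    ContDiff ℝ 1 (nfmeF τA τM A2 α) ∧
    ¬ DifferentiableAt ℝ (deriv (nfmeF τA τM A2 α)) 0 := by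
  have hπ := Real.pi_pos
  have hΓ : 0 < Real.Gamma (α + 1) := Real.Gamma_pos_of_pos (by linarith)
  have hτ : 0 < τA ^ (-α) := Real.rpow_pos_of_pos hτA _
  have hsin : 0 < Real.sin (α * Real.pi / 2) := by
    apply Real.sin_pos_of_pos_of_lt_pi
    · positivity
    · nlinarith
  have hcos : 0 < Real.cos (α * Real.pi / 2) := by
    apply Real.cos_pos_of_mem_Ioo
    constructor
    · nlinarith
    · nlinarith
  have hc1 : 0 < τA ^ (-α) * Real.sin (α * Real.pi / 2) * Real.Gamma (α + 1) := by positivity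
  have hc2 : 0 < τA ^ (-α) * Real.cos (α * Real.pi / 2) * Real.Gamma (α + 1) := by positivity
  have heq : nfmeF τA τM A2 α = fun x : ℝ =>
      x * Gfun τM A2 (τA ^ (-α) * Real.sin (α * Real.pi / 2) * Real.Gamma (α + 1))
        (τA ^ (-α) * Real.cos (α * Real.pi / 2) * Real.Gamma (α + 1)) α (x ^ 2) :=
    funext (nfmeF_eq τA τM A2 α hτM hα0 hα1 hc1.le)
  rw [heq]
  exact nfme_master τM A2 _ _ α hτM hA2 hc1 hc2 hα0 hα1
end

section
/- As χ → ∞, P₂ decays like χ^{−α}: lim_{χ→∞} χ^{α} P₂(χ) = −τ_A^{−α} sin(απ/2) Γ(α+1)/(1 + A₂)². In particular, lim_{χ→∞} P₂(χ) = 0. -/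
open Real Set Filter Topology

/-- As χ → ∞, P₂ decays like χ^{−α}:
lim_{χ→∞} χ^α P₂(χ) = −τ_A^{−α} sin(απ/2) Γ(α+1)/(1 + A₂)².
In particular, lim_{χ→∞} P₂(χ) = 0. -/
theorem P2_decay_atTop (τA τM A2 α : ℝ) (hτA : 0 < τA) (hτM : 0 < τM) (hA2 : 0 < A2)
    (hα0 : 0 < α) (hα1 : α < 1) :
    Tendsto (fun χ : ℝ => χ ^ α * P2 τA τM A2 α χ) atTop
      (𝓝 (-(τA ^ (-α) * Real.sin (α * Real.pi / 2) * Real.Gamma (α + 1)) / (1 + A2) ^ 2)) ∧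
    Tendsto (P2 τA τM A2 α) atTop (𝓝 0) := by
  set c : ℝ := τA ^ (-α) * Real.cos (α * Real.pi / 2) * Real.Gamma (α + 1) with hc
  set s : ℝ := τA ^ (-α) * Real.sin (α * Real.pi / 2) * Real.Gamma (α + 1) with hs
  set f : ℝ → ℝ := fun x => -(1 / τM) * x ^ (α - 1) - s with hf
  set g : ℝ → ℝ := fun x =>
    ((1 + A2) + c * x ^ (-α)) ^ 2 + (-(1 / τM) * x⁻¹ - s * x ^ (-α)) ^ 2 with hg
  -- eventual equality
  have key : ∀ᶠ x in atTop, x ^ α * P2 τA τM A2 α x = f x / g x := by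
    filter_upwards [eventually_gt_atTop (0 : ℝ)] with x hx
    have hp : (0 : ℝ) < x ^ α := Real.rpow_pos_of_pos hx α
    have h1 : x ^ (1 - α) = x / x ^ α := by
      rw [Real.rpow_sub hx, Real.rpow_one]
    have h2 : x ^ (α - 1) = x ^ α / x := by
      rw [Real.rpow_sub hx, Real.rpow_one]
    have h3 : x ^ (-α) = (x ^ α)⁻¹ := Real.rpow_neg hx.le α
    have hnum : x ^ α * (Ifun τA τM α x * x) = f x * x ^ 2 := by
      simp only [Ifun, hf, h1, h2]
      field_simp
      ring
    have hden : (Rfun τA α x + A2 * x) ^ 2 + (Ifun τA τM α x) ^ 2 = g x * x ^ 2 := by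
      simp only [Rfun, Ifun, hg, h1, h3]
      field_simp
      ring
    rw [P2, ← mul_div_assoc, hnum, hden]
    rw [mul_comm (g x) (x ^ 2), ← div_div]
    rw [mul_div_assoc, div_self (by positivity : x ^ 2 ≠ 0), mul_one]
  -- limits of f and g
  have h1 : Tendsto (fun x : ℝ => x ^ (-α)) atTop (𝓝 0) := tendsto_rpow_neg_atTop hα0
  have h2 : Tendsto (fun x : ℝ => x⁻¹) atTop (𝓝 (0 : ℝ)) := tendsto_inv_atTop_zero
  have h3 : Tendsto (fun x : ℝ => x ^ (α - 1)) atTop (𝓝 0) := by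
    have : α - 1 = -(1 - α) := by ring
    rw [this]
    exact tendsto_rpow_neg_atTop (by linarith)
  have hft : Tendsto f atTop (𝓝 (-s)) := by
    have h := (h3.const_mul (-(1 / τM))).sub_const s
    rw [show -(1 / τM) * (0:ℝ) - s = -s by ring] at h
    exact h
  have hgt : Tendsto g atTop (𝓝 ((1 + A2) ^ 2)) := by
    have h := (((h1.const_mul c).const_add (1 + A2)).pow 2).add
      (((h2.const_mul (-(1 / τM))).sub (h1.const_mul s)).pow 2)
    rw [show ((1 + A2) + c * (0:ℝ)) ^ 2 + (-(1 / τM) * (0:ℝ) - s * 0) ^ 2 = (1 + A2) ^ 2 by ring] at h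
    exact h
  have hgne : ((1 + A2) : ℝ) ^ 2 ≠ 0 := by positivity
  have hmain : Tendsto (fun χ : ℝ => χ ^ α * P2 τA τM A2 α χ) atTop
      (𝓝 (-s / (1 + A2) ^ 2)) := by
    exact Tendsto.congr' (Filter.EventuallyEq.symm key) (hft.div hgt hgne)
  refine ⟨hmain, ?_⟩
  have key2 : ∀ᶠ x in atTop, x ^ (-α) * (x ^ α * P2 τA τM A2 α x) = P2 τA τM A2 α x := by
    filter_upwards [eventually_gt_atTop (0 : ℝ)] with x hx
    rw [← mul_assoc, ← Real.rpow_add hx]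
    simp
  have := h1.mul hmain
  rw [zero_mul] at this
  exact Tendsto.congr' key2 this
end

section
/- The NFME dissipation function f is bounded on ℝ: there exists B > 0 such that |f(x)| ≤ B for every real x. -/
open Real Set Filter Topology

lemma P2_abs_le (τA τM A2 α : ℝ) (hτA : 0 < τA) (hτM : 0 < τM) (hA2 : 0 < A2)
    (hα0 : 0 < α) (hα1 : α < 1) (χ : ℝ) (hχ : 0 ≤ χ) :
    |P2 τA τM A2 α χ| ≤ 1 / (2 * (1 + A2)) := by
  have hπ := Real.pi_pos
  have hcos : 0 < Real.cos (α * Real.pi / 2) := by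
    apply Real.cos_pos_of_mem_Ioo
    constructor
    · nlinarith
    · nlinarith
  have hsin : 0 < Real.sin (α * Real.pi / 2) := by
    apply Real.sin_pos_of_pos_of_lt_pi
    · nlinarith
    · nlinarith
  have hΓ : 0 < Real.Gamma (α + 1) := Real.Gamma_pos_of_pos (by linarith)
  have hτ : 0 < τA ^ (-α) := Real.rpow_pos_of_pos hτA _
  have hχp : 0 ≤ χ ^ (1 - α) := Real.rpow_nonneg hχ _
  have hc : 0 ≤ χ ^ (1 - α) * τA ^ (-α) * Real.cos (α * Real.pi / 2) * Real.Gamma (α + 1) :=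
    by positivity
  have hs : 0 ≤ χ ^ (1 - α) * τA ^ (-α) * Real.sin (α * Real.pi / 2) * Real.Gamma (α + 1) :=
    by positivity
  set I := Ifun τA τM α χ with hIdef
  set R := Rfun τA α χ with hRdef
  have hIneg : I ≤ -1 / τM := by simp only [hIdef, Ifun]; linarith
  have hτMinv : 0 < 1 / τM := by positivity
  have hI0 : I < 0 := lt_of_le_of_lt hIneg (div_neg_of_neg_of_pos (by norm_num) hτM)
  have hRA : (1 + A2) * χ ≤ R + A2 * χ := by
    simp only [hRdef, Rfun]; nlinarith
  have hRAnn : 0 ≤ (1 + A2) * χ := by positivity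
  have hD : 0 < (R + A2 * χ) ^ 2 + I ^ 2 := by nlinarith
  rw [P2, ← hIdef, ← hRdef, abs_div, abs_of_pos hD, div_le_iff₀ hD, abs_mul,
    abs_of_nonneg hχ]
  have hkey : 2 * ((1 + A2) * χ) * |I| ≤ ((1 + A2) * χ) ^ 2 + |I| ^ 2 :=
    two_mul_le_add_sq _ _
  have hsq : ((1 + A2) * χ) ^ 2 ≤ (R + A2 * χ) ^ 2 := by nlinarith
  have habs : |I| ^ 2 = I ^ 2 := sq_abs I
  have h1A2 : 0 < 1 + A2 := by linarith
  rw [div_mul_eq_mul_div, le_div_iff₀ (by positivity : (0:ℝ) < 2 * (1 + A2))]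
  nlinarith [abs_nonneg I]

/-- The NFME dissipation function f is bounded on ℝ. -/
theorem nfmeF_bounded (τA τM A2 α : ℝ) (hτA : 0 < τA) (hτM : 0 < τM) (hA2 : 0 < A2)
    (hα0 : 0 < α) (hα1 : α < 1) :
    ∃ B : ℝ, 0 < B ∧ ∀ x : ℝ, |nfmeF τA τM A2 α x| ≤ B := by
  refine ⟨1 / (2 * (1 + A2)), by positivity, fun x => ?_⟩
  rw [nfmeF, abs_mul]
  have h1 : |Real.sign x| ≤ 1 := by
    rcases Real.sign_apply_eq x with h | h | h <;> simp [h]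
  have h2 := P2_abs_le τA τM A2 α hτA hτM hA2 hα0 hα1 |x| (abs_nonneg x)
  have h3 := mul_le_mul h2 h1 (abs_nonneg _) (le_of_lt (by positivity))
  simpa using h3
end

section
/- The tidal angular acceleration TIDE is continuously differentiable (of class C¹) on ℝ and bounded: there exists B > 0 with |TIDE(v)| ≤ B for all real v. -/
open Real Set Filter Topology

/-- The tidal angular acceleration TIDE(v) = −η Σ_{q=−1}^{7} G_q² f((q+2)n − 2v). -/
noncomputable def TIDE (τA τM A2 α n η : ℝ) (G : ℤ → ℝ) (v : ℝ) : ℝ :=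
  -η * ∑ q ∈ Finset.Icc (-1 : ℤ) 7, (G q) ^ 2 * nfmeF τA τM A2 α (((q : ℝ) + 2) * n - 2 * v)

/-- the denominator of `P2` -/
noncomputable def Dfun (τA τM A2 α χ : ℝ) : ℝ :=
  (Rfun τA α χ + A2 * χ) ^ 2 + (Ifun τA τM α χ) ^ 2

/-- the derivative of `P2` (valid for `χ > 0`, and the limit at `0⁺`) -/
noncomputable def Efun (τA τM A2 α χ : ℝ) : ℝ :=
  ((Ifun τA τM α χ - (1 - α) * (τA ^ (-α) * Real.sin (α * Real.pi / 2) * Real.Gamma (α + 1)) * χ ^ (1 - α)) *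
      Dfun τA τM A2 α χ -
    Ifun τA τM α χ *
      (2 * (Rfun τA α χ + A2 * χ) *
          ((1 + A2) * χ + (1 - α) * (τA ^ (-α) * Real.cos (α * Real.pi / 2) * Real.Gamma (α + 1)) * χ ^ (1 - α)) -
        2 * Ifun τA τM α χ * (1 - α) * (τA ^ (-α) * Real.sin (α * Real.pi / 2) * Real.Gamma (α + 1)) * χ ^ (1 - α))) /
    (Dfun τA τM A2 α χ) ^ 2

section aux

variable {τA τM A2 α : ℝ}

lemma sin_pos_aux (hα0 : 0 < α) (hα1 : α < 1) : 0 < Real.sin (α * Real.pi / 2) := by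
  apply Real.sin_pos_of_pos_of_lt_pi
  · positivity
  · nlinarith [Real.pi_pos]

lemma cos_nonneg_aux (hα0 : 0 < α) (hα1 : α < 1) : 0 ≤ Real.cos (α * Real.pi / 2) := by
  apply Real.cos_nonneg_of_mem_Icc
  constructor
  · nlinarith [Real.pi_pos]
  · nlinarith [Real.pi_pos]

lemma Ifun_neg (hτA : 0 < τA) (hτM : 0 < τM) (hα0 : 0 < α) (hα1 : α < 1)
    {χ : ℝ} (hχ : 0 ≤ χ) : Ifun τA τM α χ ≤ -1 / τM := by
  have h1 : (0:ℝ) ≤ χ ^ (1 - α) := Real.rpow_nonneg hχ _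
  have h2 : (0:ℝ) < τA ^ (-α) := Real.rpow_pos_of_pos hτA _
  have h3 := sin_pos_aux hα0 hα1
  have h4 : (0:ℝ) < Real.Gamma (α + 1) := Real.Gamma_pos_of_pos (by linarith)
  have : 0 ≤ χ ^ (1 - α) * τA ^ (-α) * Real.sin (α * Real.pi / 2) * Real.Gamma (α + 1) := by positivity
  simp only [Ifun]; linarith

lemma Rfun_ge (hτA : 0 < τA) (hα0 : 0 < α) (hα1 : α < 1)
    {χ : ℝ} (hχ : 0 ≤ χ) : χ ≤ Rfun τA α χ := by
  have h1 : (0:ℝ) ≤ χ ^ (1 - α) := Real.rpow_nonneg hχ _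
  have h2 : (0:ℝ) < τA ^ (-α) := Real.rpow_pos_of_pos hτA _
  have h3 := cos_nonneg_aux hα0 hα1
  have h4 : (0:ℝ) < Real.Gamma (α + 1) := Real.Gamma_pos_of_pos (by linarith)
  have : 0 ≤ χ ^ (1 - α) * τA ^ (-α) * Real.cos (α * Real.pi / 2) * Real.Gamma (α + 1) := by positivity
  simp only [Rfun]; linarith

lemma Dfun_pos (hτA : 0 < τA) (hτM : 0 < τM) (hα0 : 0 < α) (hα1 : α < 1)
    {χ : ℝ} (hχ : 0 ≤ χ) : 0 < Dfun τA τM A2 α χ := by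
  have hI : Ifun τA τM α χ ≤ -1 / τM := Ifun_neg hτA hτM hα0 hα1 hχ
  have hm : -1 / τM < 0 := div_neg_of_neg_of_pos (by norm_num) hτM
  have hI0 : Ifun τA τM α χ < 0 := lt_of_le_of_lt hI hm
  have hI2 : 0 < (Ifun τA τM α χ) ^ 2 := by nlinarith
  have := sq_nonneg (Rfun τA α χ + A2 * χ)
  simp only [Dfun]; linarith

lemma abs_nfmeF_le (hτA : 0 < τA) (hτM : 0 < τM) (hA2 : 0 < A2) (hα0 : 0 < α) (hα1 : α < 1)
    (x : ℝ) : |nfmeF τA τM A2 α x| ≤ 1 / 2 := by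
  rcases eq_or_ne x 0 with rfl | hx
  · simp [nfmeF, Real.sign_zero]
  · have hχ : 0 < |x| := abs_pos.2 hx
    set χ := |x| with hχdef
    have hI : Ifun τA τM α χ ≤ -1 / τM := Ifun_neg hτA hτM hα0 hα1 hχ.le
    have hIneg : Ifun τA τM α χ < 0 := lt_of_le_of_lt hI (div_neg_of_neg_of_pos (by norm_num) hτM)
    have hR : χ ≤ Rfun τA α χ := Rfun_ge hτA hα0 hα1 hχ.le
    have hD : 0 < Dfun τA τM A2 α χ := Dfun_pos hτA hτM hα0 hα1 hχ.le
    have hP : |P2 τA τM A2 α χ| ≤ 1 / 2 := by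
      rw [abs_le]
      have hDle : Dfun τA τM A2 α χ = (Rfun τA α χ + A2 * χ) ^ 2 + (Ifun τA τM α χ) ^ 2 := rfl
      have hq : P2 τA τM A2 α χ = Ifun τA τM α χ * χ / Dfun τA τM A2 α χ := rfl
      constructor
      · rw [hq, neg_le, ← neg_div, div_le_iff₀ hD]
        nlinarith [sq_nonneg (Rfun τA α χ + A2 * χ + Ifun τA τM α χ),
          mul_pos hA2 hχ, mul_nonneg (mul_pos hA2 hχ).le (neg_nonneg.2 hIneg.le),
          mul_nonneg (sub_nonneg.2 hR) (neg_nonneg.2 hIneg.le)]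
      · have : P2 τA τM A2 α χ ≤ 0 := by
          rw [hq]
          apply div_nonpos_of_nonpos_of_nonneg _ hD.le
          exact mul_nonpos_of_nonpos_of_nonneg hIneg.le hχ.le
        linarith
    have hs : |Real.sign x| ≤ 1 := by
      rcases Real.sign_apply_eq x with h | h | h <;> simp [h]
    calc |nfmeF τA τM A2 α x| = |P2 τA τM A2 α χ| * |Real.sign x| := abs_mul _ _
      _ ≤ (1/2) * 1 := mul_le_mul hP hs (abs_nonneg _) (by norm_num)
      _ = 1/2 := by ring

end aux

section deriv

variable {τA τM A2 α : ℝ}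

lemma hasDerivAt_P2 (hτA : 0 < τA) (hτM : 0 < τM) (hα0 : 0 < α) (hα1 : α < 1)
    {χ : ℝ} (hχ : 0 < χ) :
    HasDerivAt (fun y => P2 τA τM A2 α y) (Efun τA τM A2 α χ) χ := by
  have hχ' : χ ≠ 0 := ne_of_gt hχ
  have hp : HasDerivAt (fun y : ℝ => y ^ (1 - α)) ((1 - α) * χ ^ (1 - α) / χ) χ := by
    have key : χ ^ (1 - α - 1) = χ ^ (1 - α) / χ := by
      rw [Real.rpow_sub hχ, Real.rpow_one]
    have h := Real.hasDerivAt_rpow_const (x := χ) (p := 1 - α) (Or.inl hχ')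
    rw [key] at h
    simpa [mul_div_assoc] using h
  have hI : HasDerivAt (fun y => Ifun τA τM α y)
      (-((1 - α) * χ ^ (1 - α) / χ * τA ^ (-α) * Real.sin (α * Real.pi / 2) * Real.Gamma (α + 1))) χ := by
    have := (((hp.mul_const (τA ^ (-α))).mul_const (Real.sin (α * Real.pi / 2))).mul_const
      (Real.Gamma (α + 1))).const_sub (-1 / τM)
    simpa [Ifun] using this
  have hR : HasDerivAt (fun y => Rfun τA α y)
      (1 + (1 - α) * χ ^ (1 - α) / χ * τA ^ (-α) * Real.cos (α * Real.pi / 2) * Real.Gamma (α + 1)) χ := by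
    have := (hasDerivAt_id χ).add (((hp.mul_const (τA ^ (-α))).mul_const
      (Real.cos (α * Real.pi / 2))).mul_const (Real.Gamma (α + 1)))
    simpa [Rfun, Pi.add_def] using this
  have hRA : HasDerivAt (fun y => Rfun τA α y + A2 * y)
      ((1 + (1 - α) * χ ^ (1 - α) / χ * τA ^ (-α) * Real.cos (α * Real.pi / 2) * Real.Gamma (α + 1)) + A2 * 1) χ :=
    hR.add ((hasDerivAt_id χ).const_mul A2)
  have hN : HasDerivAt (fun y => Ifun τA τM α y * y)
      (-((1 - α) * χ ^ (1 - α) / χ * τA ^ (-α) * Real.sin (α * Real.pi / 2) * Real.Gamma (α + 1)) * χ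
        + Ifun τA τM α χ * 1) χ := hI.mul (hasDerivAt_id χ)
  have hD : HasDerivAt (fun y => (Rfun τA α y + A2 * y) ^ 2 + (Ifun τA τM α y) ^ 2)
      ((2 : ℕ) * (Rfun τA α χ + A2 * χ) ^ 1 *
          ((1 + (1 - α) * χ ^ (1 - α) / χ * τA ^ (-α) * Real.cos (α * Real.pi / 2) * Real.Gamma (α + 1)) + A2 * 1)
        + (2 : ℕ) * (Ifun τA τM α χ) ^ 1 *
          (-((1 - α) * χ ^ (1 - α) / χ * τA ^ (-α) * Real.sin (α * Real.pi / 2) * Real.Gamma (α + 1)))) χ :=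
    (hRA.pow 2).add (hI.pow 2)
  have hD0 : ((Rfun τA α χ + A2 * χ) ^ 2 + (Ifun τA τM α χ) ^ 2) ≠ 0 :=
    ne_of_gt (Dfun_pos hτA hτM hα0 hα1 hχ.le)
  have hq := hN.div hD hD0
  simp only [Pi.div_def] at hq
  simp only [P2]
  refine hq.congr_deriv ?_
  simp only [Efun, Dfun, pow_one]
  push_cast
  field_simp
  ring

end deriv

section nfme

variable {τA τM A2 α : ℝ}

lemma nfmeF_odd (τA τM A2 α x : ℝ) : nfmeF τA τM A2 α (-x) = -nfmeF τA τM A2 α x := by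
  simp [nfmeF, Real.sign_neg, abs_neg]

lemma hasDerivAt_nfmeF_pos (hτA : 0 < τA) (hτM : 0 < τM) (hα0 : 0 < α) (hα1 : α < 1)
    {x : ℝ} (hx : 0 < x) :
    HasDerivAt (nfmeF τA τM A2 α) (Efun τA τM A2 α |x|) x := by
  rw [abs_of_pos hx]
  apply (hasDerivAt_P2 hτA hτM hα0 hα1 hx).congr_of_eventuallyEq
  filter_upwards [eventually_gt_nhds hx] with y hy
  rw [nfmeF, abs_of_pos hy, Real.sign_of_pos hy, mul_one]

lemma hasDerivAt_nfmeF_neg (hτA : 0 < τA) (hτM : 0 < τM) (hα0 : 0 < α) (hα1 : α < 1)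
    {x : ℝ} (hx : x < 0) :
    HasDerivAt (nfmeF τA τM A2 α) (Efun τA τM A2 α |x|) x := by
  have h := hasDerivAt_nfmeF_pos (A2 := A2) hτA hτM hα0 hα1 (neg_pos.2 hx)
  have h2 := (h.comp x (hasDerivAt_neg x)).neg
  simp only [Function.comp_def, Pi.neg_def] at h2
  have hfun : (fun y => -nfmeF τA τM A2 α (-y)) = nfmeF τA τM A2 α := by
    funext y; rw [nfmeF_odd, neg_neg]
  rw [hfun] at h2
  have habs : |(-x)| = |x| := abs_neg x
  rw [habs] at h2
  refine h2.congr_deriv ?_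
  ring

lemma continuous_rpow_one_sub (hα1 : α < 1) : Continuous (fun χ : ℝ => χ ^ (1 - α)) := by
  rw [continuous_iff_continuousAt]
  intro t
  exact Real.continuousAt_rpow_const t _ (Or.inr (by linarith))

lemma continuous_Ifun (hα1 : α < 1) : Continuous (fun χ => Ifun τA τM α χ) := by
  simp only [Ifun]
  exact continuous_const.sub
    ((((continuous_rpow_one_sub hα1).mul continuous_const).mul continuous_const).mul continuous_const)

lemma continuous_Rfun (hα1 : α < 1) : Continuous (fun χ => Rfun τA α χ) := by
  simp only [Rfun]
  exact continuous_id.add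
    ((((continuous_rpow_one_sub hα1).mul continuous_const).mul continuous_const).mul continuous_const)

lemma continuous_Dfun (hα1 : α < 1) : Continuous (fun χ => Dfun τA τM A2 α χ) := by
  simp only [Dfun]
  exact (((continuous_Rfun hα1).add (continuous_const.mul continuous_id)).pow 2).add
    ((continuous_Ifun hα1).pow 2)

lemma Ifun_zero (hα1 : α < 1) : Ifun τA τM α 0 = -1 / τM := by
  rw [Ifun, Real.zero_rpow (by linarith : (1:ℝ) - α ≠ 0)]
  ring

lemma Dfun_zero (hα1 : α < 1) : Dfun τA τM A2 α 0 = 1 / τM ^ 2 := by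
  rw [Dfun, Ifun_zero hα1, Rfun, Real.zero_rpow (by linarith : (1:ℝ) - α ≠ 0)]
  ring

lemma real_abs_mul_sign (y : ℝ) : |y| * Real.sign y = y := by
  rcases lt_trichotomy y 0 with h|h|h
  · rw [Real.sign_of_neg h, abs_of_neg h]; ring
  · simp [h]
  · rw [Real.sign_of_pos h, abs_of_pos h]; ring

lemma nfmeF_zero : nfmeF τA τM A2 α 0 = 0 := by
  simp [nfmeF, Real.sign_zero]

lemma hasDerivAt_nfmeF_zero (hτA : 0 < τA) (hτM : 0 < τM) (hα0 : 0 < α) (hα1 : α < 1) :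
    HasDerivAt (nfmeF τA τM A2 α) (-τM) 0 := by
  rw [hasDerivAt_iff_tendsto_slope]
  have hτM' : τM ≠ 0 := ne_of_gt hτM
  have hcont : ContinuousAt (fun y : ℝ => Ifun τA τM α |y| / Dfun τA τM A2 α |y|) 0 := by
    apply ContinuousAt.div
    · exact (continuous_Ifun hα1).continuousAt.comp continuous_abs.continuousAt
    · exact (continuous_Dfun hα1).continuousAt.comp continuous_abs.continuousAt
    · have := Dfun_pos (A2 := A2) hτA hτM hα0 hα1 (le_refl (0:ℝ))
      simpa using ne_of_gt this
  have hval : Ifun τA τM α |(0:ℝ)| / Dfun τA τM A2 α |(0:ℝ)| = -τM := by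
    rw [abs_zero, Ifun_zero hα1, Dfun_zero hα1]
    field_simp
  have h1 : Tendsto (fun y : ℝ => Ifun τA τM α |y| / Dfun τA τM A2 α |y|) (𝓝[≠] (0:ℝ)) (𝓝 (-τM)) := by
    have := hcont.tendsto
    rw [hval] at this
    exact this.mono_left nhdsWithin_le_nhds
  apply h1.congr'
  filter_upwards [self_mem_nhdsWithin] with y hy
  have hy0 : y ≠ 0 := hy
  have hDy : Dfun τA τM A2 α |y| ≠ 0 := ne_of_gt (Dfun_pos hτA hτM hα0 hα1 (abs_nonneg y))
  have hsy : |y| * Real.sign y = y := real_abs_mul_sign y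
  have hfy : nfmeF τA τM A2 α y = Ifun τA τM α |y| / Dfun τA τM A2 α |y| * y := by
    have hDdef : Dfun τA τM A2 α |y| =
        (Rfun τA α |y| + A2 * |y|) ^ 2 + (Ifun τA τM α |y|) ^ 2 := rfl
    rw [nfmeF, P2, ← hDdef]
    field_simp
    linear_combination (Ifun τA τM α |y|) * hsy
  rw [slope_def_field, nfmeF_zero, sub_zero, sub_zero, hfy, mul_div_assoc, div_self hy0, mul_one]

end nfme

section final

variable {τA τM A2 α : ℝ}

lemma Efun_zero (hτM : 0 < τM) (hα1 : α < 1) : Efun τA τM A2 α 0 = -τM := by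
  have h0 : (0:ℝ) ^ (1 - α) = 0 := Real.zero_rpow (by linarith : (1:ℝ) - α ≠ 0)
  have hτM' : τM ≠ 0 := ne_of_gt hτM
  rw [Efun, Ifun_zero hα1, Dfun_zero hα1, Rfun, h0]
  field_simp
  ring

lemma contDiff_nfmeF (hτA : 0 < τA) (hτM : 0 < τM) (hα0 : 0 < α) (hα1 : α < 1) :
    ContDiff ℝ 1 (nfmeF τA τM A2 α) := by
  have hg : ∀ x : ℝ, HasDerivAt (nfmeF τA τM A2 α) (Efun τA τM A2 α |x|) x := by
    intro x
    rcases lt_trichotomy x 0 with h|h|h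
    · exact hasDerivAt_nfmeF_neg hτA hτM hα0 hα1 h
    · subst h
      rw [abs_zero, Efun_zero hτM hα1]
      exact hasDerivAt_nfmeF_zero hτA hτM hα0 hα1
    · exact hasDerivAt_nfmeF_pos hτA hτM hα0 hα1 h
  have c : Continuous (fun χ : ℝ => χ ^ (1 - α)) := continuous_rpow_one_sub hα1
  have hIc : Continuous (fun χ => Ifun τA τM α χ) := continuous_Ifun hα1
  have hRc : Continuous (fun χ => Rfun τA α χ) := continuous_Rfun hα1
  have hDc : Continuous (fun χ => Dfun τA τM A2 α χ) := continuous_Dfun (A2 := A2) hα1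
  have hnum : Continuous (fun χ : ℝ =>
      (Ifun τA τM α χ - (1 - α) * (τA ^ (-α) * Real.sin (α * Real.pi / 2) * Real.Gamma (α + 1)) * χ ^ (1 - α)) *
        Dfun τA τM A2 α χ -
      Ifun τA τM α χ *
        (2 * (Rfun τA α χ + A2 * χ) *
            ((1 + A2) * χ + (1 - α) * (τA ^ (-α) * Real.cos (α * Real.pi / 2) * Real.Gamma (α + 1)) * χ ^ (1 - α)) -
          2 * Ifun τA τM α χ * (1 - α) * (τA ^ (-α) * Real.sin (α * Real.pi / 2) * Real.Gamma (α + 1)) * χ ^ (1 - α))) :=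
    ((hIc.sub ((continuous_const.mul continuous_const).mul c)).mul hDc).sub
      (hIc.mul (((continuous_const.mul (hRc.add (continuous_const.mul continuous_id))).mul
          ((continuous_const.mul continuous_id).add ((continuous_const.mul continuous_const).mul c))).sub
        ((((continuous_const.mul hIc).mul continuous_const).mul continuous_const).mul c)))
  have hgc : Continuous (fun x : ℝ => Efun τA τM A2 α |x|) := by
    rw [continuous_iff_continuousAt]
    intro x
    have hE : ContinuousAt (fun χ => Efun τA τM A2 α χ) |x| := by
      simp only [Efun]
      exact ContinuousAt.div hnum.continuousAt ((hDc.pow 2).continuousAt)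
        (pow_ne_zero 2 (ne_of_gt (Dfun_pos hτA hτM hα0 hα1 (abs_nonneg x))))
    exact hE.comp continuous_abs.continuousAt
  rw [contDiff_one_iff_deriv]
  refine ⟨fun x => (hg x).differentiableAt, ?_⟩
  have hder : deriv (nfmeF τA τM A2 α) = fun x => Efun τA τM A2 α |x| :=
    funext fun x => (hg x).deriv
  rw [hder]
  exact hgc

end final

/-- The tidal angular acceleration TIDE is C¹ on ℝ and bounded. -/
theorem TIDE_contDiff_and_bounded (τA τM A2 α n η : ℝ) (G : ℤ → ℝ)
    (hτA : 0 < τA) (hτM : 0 < τM) (hA2 : 0 < A2) (hα0 : 0 < α) (hα1 : α < 1)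
    (hn : 0 < n) (hη : 0 ≤ η) :
    ContDiff ℝ 1 (TIDE τA τM A2 α n η G) ∧
    ∃ B : ℝ, 0 < B ∧ ∀ v : ℝ, |TIDE τA τM A2 α n η G v| ≤ B := by
  have hf1 : ContDiff ℝ 1 (nfmeF τA τM A2 α) := contDiff_nfmeF hτA hτM hα0 hα1
  constructor
  · have heq : TIDE τA τM A2 α n η G = fun v =>
        -η * ∑ q ∈ Finset.Icc (-1 : ℤ) 7, (G q) ^ 2 * nfmeF τA τM A2 α (((q : ℝ) + 2) * n - 2 * v) := rfl
    rw [heq]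
    apply ContDiff.mul contDiff_const
    apply ContDiff.sum
    intro q _
    exact contDiff_const.mul (hf1.comp (contDiff_const.sub (contDiff_const.mul contDiff_id)))
  · have hS0 : (0:ℝ) ≤ ∑ q ∈ Finset.Icc (-1 : ℤ) 7, (G q) ^ 2 :=
      Finset.sum_nonneg fun q _ => sq_nonneg _
    refine ⟨η * (∑ q ∈ Finset.Icc (-1 : ℤ) 7, (G q) ^ 2) * (1/2) + 1, ?_, ?_⟩
    · have : 0 ≤ η * (∑ q ∈ Finset.Icc (-1 : ℤ) 7, (G q) ^ 2) * (1/2) := by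
        apply mul_nonneg (mul_nonneg hη hS0); norm_num
      linarith
    · intro v
      have hb : |∑ q ∈ Finset.Icc (-1 : ℤ) 7, (G q) ^ 2 * nfmeF τA τM A2 α (((q : ℝ) + 2) * n - 2 * v)|
          ≤ ∑ q ∈ Finset.Icc (-1 : ℤ) 7, (G q) ^ 2 * (1/2) := by
        refine (Finset.abs_sum_le_sum_abs _ _).trans (Finset.sum_le_sum fun q _ => ?_)
        rw [abs_mul, abs_of_nonneg (sq_nonneg (G q))]
        exact mul_le_mul_of_nonneg_left (abs_nfmeF_le hτA hτM hA2 hα0 hα1 _) (sq_nonneg _)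
      calc |TIDE τA τM A2 α n η G v|
          = |(-η)| * |∑ q ∈ Finset.Icc (-1 : ℤ) 7, (G q) ^ 2 * nfmeF τA τM A2 α (((q : ℝ) + 2) * n - 2 * v)| := by
            rw [TIDE, abs_mul]
        _ = η * |∑ q ∈ Finset.Icc (-1 : ℤ) 7, (G q) ^ 2 * nfmeF τA τM A2 α (((q : ℝ) + 2) * n - 2 * v)| := by
            rw [abs_neg, abs_of_nonneg hη]
        _ ≤ η * ∑ q ∈ Finset.Icc (-1 : ℤ) 7, (G q) ^ 2 * (1/2) := mul_le_mul_of_nonneg_left hb hη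
        _ = η * (∑ q ∈ Finset.Icc (-1 : ℤ) 7, (G q) ^ 2) * (1/2) := by
            rw [← Finset.sum_mul]; ring
        _ ≤ η * (∑ q ∈ Finset.Icc (-1 : ℤ) 7, (G q) ^ 2) * (1/2) + 1 := by linarith
end

section
/- The tidal acceleration has a kink at each half-integer multiple of the mean motion: if η > 0 and G_q ≠ 0 for some q ∈ {−1, …, 7}, then the derivative of TIDE (which exists and is continuous on ℝ) is not differentiable at v = (q+2)n/2; i.e. TIDE is C¹ but not twice differentiable at v = (q+2)n/2. -/
open Real Set Filter Topology

set_option linter.unusedSectionVars false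

namespace TideAux

noncomputable def cS (τA α : ℝ) : ℝ := τA ^ (-α) * Real.sin (α * Real.pi / 2) * Real.Gamma (α + 1)
noncomputable def cC (τA α : ℝ) : ℝ := τA ^ (-α) * Real.cos (α * Real.pi / 2) * Real.Gamma (α + 1)

noncomputable def Dd (τA τM A2 α χ : ℝ) : ℝ :=
  (Rfun τA α χ + A2 * χ) ^ 2 + (Ifun τA τM α χ) ^ 2

lemma Ifun_eq (τA τM α χ : ℝ) : Ifun τA τM α χ = -1 / τM - χ ^ (1 - α) * cS τA α := by
  unfold Ifun cS; ring

lemma Rfun_eq (τA α χ : ℝ) : Rfun τA α χ = χ + χ ^ (1 - α) * cC τA α := by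
  unfold Rfun cC; ring

section params
variable {τA τM A2 α : ℝ} (hτA : 0 < τA) (hτM : 0 < τM) (hA2 : 0 < A2)
  (hα0 : 0 < α) (hα1 : α < 1)

include hτA hα0 hα1 in
lemma cS_pos : 0 < cS τA α := by
  have h1 : 0 < Real.sin (α * Real.pi / 2) := by
    apply Real.sin_pos_of_pos_of_lt_pi
    · positivity
    · nlinarith [Real.pi_pos]
  have h2 : 0 < Real.Gamma (α + 1) := Real.Gamma_pos_of_pos (by linarith)
  have h3 : (0:ℝ) < τA ^ (-α) := Real.rpow_pos_of_pos hτA _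
  unfold cS; positivity

include hτA hα0 hα1 in
lemma cC_pos : 0 < cC τA α := by
  have h1 : 0 < Real.cos (α * Real.pi / 2) := by
    apply Real.cos_pos_of_mem_Ioo
    constructor
    · nlinarith [Real.pi_pos]
    · nlinarith [Real.pi_pos]
  have h2 : 0 < Real.Gamma (α + 1) := Real.Gamma_pos_of_pos (by linarith)
  have h3 : (0:ℝ) < τA ^ (-α) := Real.rpow_pos_of_pos hτA _
  unfold cC; positivity

include hτA hτM hα0 hα1 in
lemma Ifun_le {χ : ℝ} (hχ : 0 ≤ χ) : Ifun τA τM α χ ≤ -1 / τM := by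
  rw [Ifun_eq]
  have h1 : 0 ≤ χ ^ (1 - α) := Real.rpow_nonneg hχ _
  nlinarith [cS_pos hτA hα0 hα1]

include hτA hτM hα0 hα1 in
lemma Ifun_neg {χ : ℝ} (hχ : 0 ≤ χ) : Ifun τA τM α χ < 0 :=
  lt_of_le_of_lt (Ifun_le hτA hτM hα0 hα1 hχ) (by
    have h : (0:ℝ) < 1 / τM := by positivity
    rw [neg_div]; linarith)

include hτA hτM hα0 hα1 in
lemma Dd_pos {χ : ℝ} (hχ : 0 ≤ χ) : 0 < Dd τA τM A2 α χ := by
  have h := Ifun_neg hτA hτM hα0 hα1 (χ := χ) hχ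
  unfold Dd
  nlinarith [sq_nonneg (Rfun τA α χ + A2 * χ)]


end params

noncomputable def Ii' (τA α χ : ℝ) : ℝ := -((1 - α) * χ ^ (-α) * cS τA α)

noncomputable def Dd' (τA τM A2 α χ : ℝ) : ℝ :=
  2 * (Rfun τA α χ + A2 * χ) * ((1 + (1 - α) * χ ^ (-α) * cC τA α) + A2)
    + 2 * Ifun τA τM α χ * Ii' τA α χ

noncomputable def Ee (τA τM A2 α χ : ℝ) : ℝ :=
  (Ii' τA α χ * Dd τA τM A2 α χ - Ifun τA τM α χ * Dd' τA τM A2 α χ) / (Dd τA τM A2 α χ) ^ 2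

noncomputable def psi (τA τM A2 α χ : ℝ) : ℝ :=
  Ifun τA τM α χ / Dd τA τM A2 α χ + χ * Ee τA τM A2 α χ

noncomputable def Qf (τA τM A2 α x : ℝ) : ℝ := Ifun τA τM α |x| / Dd τA τM A2 α |x|

noncomputable def Gd (τA τM A2 α x : ℝ) : ℝ := psi τA τM A2 α |x|

lemma g_eq (τA τM A2 α x : ℝ) : nfmeF τA τM A2 α x = x * Qf τA τM A2 α x := by
  have hsx : |x| * Real.sign x = x := by
    rcases lt_trichotomy x 0 with h | h | h
    · rw [abs_of_neg h, Real.sign_of_neg h]; ring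
    · simp [h]
    · rw [abs_of_pos h, Real.sign_of_pos h]; ring
  unfold nfmeF P2 Qf
  rw [show Ifun τA τM α |x| * |x| / ((Rfun τA α |x| + A2 * |x|) ^ 2 + Ifun τA τM α |x| ^ 2)
        * Real.sign x
      = Ifun τA τM α |x| * (|x| * Real.sign x)
        / ((Rfun τA α |x| + A2 * |x|) ^ 2 + Ifun τA τM α |x| ^ 2) from by ring, hsx]
  unfold Dd
  ring

section derivs
variable {τA τM A2 α : ℝ} (hτA : 0 < τA) (hτM : 0 < τM) (hA2 : 0 < A2)
  (hα0 : 0 < α) (hα1 : α < 1)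

include hα0 hα1 in
lemma hasDerivAt_Ifun {χ : ℝ} (hχ : 0 < χ) :
    HasDerivAt (Ifun τA τM α) (Ii' τA α χ) χ := by
  have hp := Real.hasDerivAt_rpow_const (x := χ) (p := 1 - α) (Or.inl hχ.ne')
  have h1 : HasDerivAt (fun y : ℝ => -1 / τM - y ^ (1 - α) * cS τA α)
      (-((1 - α) * χ ^ (1 - α - 1) * cS τA α)) χ := (hp.mul_const _).const_sub _
  have h2 : (fun y : ℝ => -1 / τM - y ^ (1 - α) * cS τA α) = Ifun τA τM α :=
    funext fun y => (Ifun_eq τA τM α y).symm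
  rw [h2] at h1
  convert h1 using 1
  unfold Ii'
  rw [show (1 : ℝ) - α - 1 = -α by ring]

include hα0 hα1 in
lemma hasDerivAt_Rfun {χ : ℝ} (hχ : 0 < χ) :
    HasDerivAt (Rfun τA α) (1 + (1 - α) * χ ^ (-α) * cC τA α) χ := by
  have hp := Real.hasDerivAt_rpow_const (x := χ) (p := 1 - α) (Or.inl hχ.ne')
  have h1 : HasDerivAt (fun y : ℝ => y + y ^ (1 - α) * cC τA α)
      (1 + (1 - α) * χ ^ (1 - α - 1) * cC τA α) χ := (hasDerivAt_id χ).add (hp.mul_const _)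
  have h2 : (fun y : ℝ => y + y ^ (1 - α) * cC τA α) = Rfun τA α :=
    funext fun y => (Rfun_eq τA α y).symm
  rw [h2] at h1
  convert h1 using 2
  rw [show (1 : ℝ) - α - 1 = -α by ring]

include hα0 hα1 in
lemma hasDerivAt_Dd {χ : ℝ} (hχ : 0 < χ) :
    HasDerivAt (Dd τA τM A2 α) (Dd' τA τM A2 α χ) χ := by
  have hR : HasDerivAt (fun y : ℝ => Rfun τA α y + A2 * y)
      ((1 + (1 - α) * χ ^ (-α) * cC τA α) + A2 * 1) χ :=
    (hasDerivAt_Rfun hα0 hα1 hχ).add ((hasDerivAt_id χ).const_mul A2)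
  have hI := hasDerivAt_Ifun (τA := τA) (τM := τM) hα0 hα1 hχ
  have h := (hR.pow 2).add (hI.pow 2)
  have h2 : (fun y : ℝ => (Rfun τA α y + A2 * y) ^ 2 + Ifun τA τM α y ^ 2)
      = Dd τA τM A2 α := rfl
  rw [← h2]
  refine h.congr_deriv ?_
  unfold Dd'
  push_cast
  ring

include hα0 hα1 in
lemma hasDerivAt_phi {χ : ℝ} (hD : Dd τA τM A2 α χ ≠ 0) (hχ : 0 < χ) :
    HasDerivAt (fun y => Ifun τA τM α y / Dd τA τM A2 α y) (Ee τA τM A2 α χ) χ := by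
  have h := (hasDerivAt_Ifun (τA := τA) (τM := τM) hα0 hα1 hχ).div
    (hasDerivAt_Dd (τA := τA) (τM := τM) (A2 := A2) hα0 hα1 hχ) hD
  exact h

include hτA hτM hA2 hα0 hα1 in
lemma hasDerivAt_g : ∀ x : ℝ,
    HasDerivAt (fun y => y * Qf τA τM A2 α y) (Gd τA τM A2 α x) x := by
  intro x
  rcases lt_trichotomy x 0 with hx | hx | hx
  · -- negative case
    have hpos : 0 < -x := by linarith
    have hD := (Dd_pos (A2 := A2) hτA hτM hα0 hα1 (χ := -x) hpos.le).ne'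
    have hphi := hasDerivAt_phi (τA := τA) (τM := τM) (A2 := A2) hα0 hα1 hD hpos
    have hneg : HasDerivAt (fun y : ℝ => -y) (-1) x := hasDerivAt_neg x
    have hcomp := hphi.comp x hneg
    have hmul := (hasDerivAt_id x).mul hcomp
    have hev : (fun y => y * Qf τA τM A2 α y)
        =ᶠ[𝓝 x] (fun y => y * ((fun z => Ifun τA τM α z / Dd τA τM A2 α z) ∘ fun z => -z) y) := by
      filter_upwards [Iio_mem_nhds hx] with y hy
      simp only [Qf, Function.comp, abs_of_neg (show y < (0:ℝ) from hy)]
    have h := hmul.congr_of_eventuallyEq hev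
    refine h.congr_deriv ?_
    unfold Gd psi
    rw [abs_of_neg hx]
    simp only [Function.comp, id_eq]
    ring
  · -- zero case
    subst hx
    have hcont : ContinuousAt (Qf τA τM A2 α) 0 := by
      have h1 : Continuous fun x : ℝ => |x| ^ (1 - α) :=
        (Real.continuous_rpow_const (by linarith)).comp continuous_abs
      have hI : Continuous fun x : ℝ => Ifun τA τM α |x| := by
        simp only [Ifun_eq]
        exact continuous_const.sub (h1.mul continuous_const)
      have hR : Continuous fun x : ℝ => Rfun τA α |x| := by
        simp only [Rfun_eq]
        exact continuous_abs.add (h1.mul continuous_const)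
      have hDc : Continuous fun x : ℝ => Dd τA τM A2 α |x| := by
        unfold Dd
        exact ((hR.add (continuous_const.mul continuous_abs)).pow 2).add (hI.pow 2)
      exact (hI.div hDc fun x =>
        (Dd_pos (A2 := A2) hτA hτM hα0 hα1 (abs_nonneg x)).ne').continuousAt
    rw [hasDerivAt_iff_tendsto_slope]
    have hev : slope (fun y => y * Qf τA τM A2 α y) 0 =ᶠ[𝓝[≠] (0:ℝ)] Qf τA τM A2 α := by
      filter_upwards [self_mem_nhdsWithin] with y hy
      have hy' : y ≠ 0 := hy
      rw [slope_def_field]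
      field_simp
      ring
    rw [tendsto_congr' hev]
    have : Gd τA τM A2 α 0 = Qf τA τM A2 α 0 := by
      unfold Gd psi Qf
      simp
    rw [this]
    exact (hcont.mono_left nhdsWithin_le_nhds)
  · -- positive case
    have hD := (Dd_pos (A2 := A2) hτA hτM hα0 hα1 (χ := x) hx.le).ne'
    have hphi := hasDerivAt_phi (τA := τA) (τM := τM) (A2 := A2) hα0 hα1 hD hx
    have hmul := (hasDerivAt_id x).mul hphi
    have hev : (fun y => y * Qf τA τM A2 α y)
        =ᶠ[𝓝 x] (fun y => y * (Ifun τA τM α y / Dd τA τM A2 α y)) := by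
      filter_upwards [Ioi_mem_nhds hx] with y hy
      simp only [Qf, abs_of_pos (show (0:ℝ) < y from hy)]
    have h := hmul.congr_of_eventuallyEq hev
    refine h.congr_deriv ?_
    unfold Gd psi
    rw [abs_of_pos hx]
    simp only [id_eq]
    ring

end derivs

section cont
variable {τA τM A2 α : ℝ} (hτA : 0 < τA) (hτM : 0 < τM) (hA2 : 0 < A2)
  (hα0 : 0 < α) (hα1 : α < 1)

lemma Rfun_zero (hα1' : α ≠ 1) : Rfun τA α 0 = 0 := by
  unfold Rfun; rw [Real.zero_rpow (by intro h; apply hα1'; linarith [sub_eq_zero.mp h])]; ring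

lemma Ifun_zero (hα1' : α ≠ 1) : Ifun τA τM α 0 = -1 / τM := by
  unfold Ifun; rw [Real.zero_rpow (by intro h; apply hα1'; linarith [sub_eq_zero.mp h])]; ring

lemma Dd_zero (hα1' : α ≠ 1) : Dd τA τM A2 α 0 = (1 / τM) ^ 2 := by
  unfold Dd; rw [Rfun_zero hα1', Ifun_zero hα1']; ring

include hα1 in
lemma cont_Ifun : Continuous (Ifun τA τM α) := by
  have h1 : Continuous fun χ : ℝ => χ ^ (1 - α) := Real.continuous_rpow_const (by linarith)
  have h2 : Ifun τA τM α = fun χ => -1 / τM - χ ^ (1 - α) * cS τA α :=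
    funext (Ifun_eq τA τM α)
  rw [h2]; exact continuous_const.sub (h1.mul continuous_const)

include hα1 in
lemma cont_Rfun : Continuous (Rfun τA α) := by
  have h1 : Continuous fun χ : ℝ => χ ^ (1 - α) := Real.continuous_rpow_const (by linarith)
  have h2 : Rfun τA α = fun χ => χ + χ ^ (1 - α) * cC τA α := funext (Rfun_eq τA α)
  rw [h2]; exact continuous_id.add (h1.mul continuous_const)

include hα1 in
lemma cont_Dd : Continuous (Dd τA τM A2 α) := by
  have : Dd τA τM A2 α = fun χ => (Rfun τA α χ + A2 * χ) ^ 2 + Ifun τA τM α χ ^ 2 := rfl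
  rw [this]
  exact (((cont_Rfun (τA := τA) hα1).add (continuous_const.mul continuous_id)).pow 2).add
    ((cont_Ifun (τA := τA) (τM := τM) hα1).pow 2)

include hτA hτM hα0 hα1 in
lemma cont_Qf : Continuous (Qf τA τM A2 α) := by
  have hI := (cont_Ifun (τA := τA) (τM := τM) (α := α) hα1).comp continuous_abs
  have hD := (cont_Dd (τA := τA) (τM := τM) (A2 := A2) (α := α) hα1).comp continuous_abs
  exact hI.div hD fun x => (Dd_pos (A2 := A2) hτA hτM hα0 hα1 (abs_nonneg x)).ne'

include hτA hτM hA2 hα0 hα1 in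
lemma tendsto_chiEe :
    Tendsto (fun χ => χ * Ee τA τM A2 α χ) (𝓝[>] (0:ℝ)) (𝓝 0) := by
  have hα1' : α ≠ 1 := ne_of_lt hα1
  set F1 : ℝ → ℝ := fun χ =>
    ((-((1 - α) * χ ^ (1 - α) * cS τA α)) * Dd τA τM A2 α χ -
      Ifun τA τM α χ *
        (2 * (Rfun τA α χ + A2 * χ) * (χ + (1 - α) * χ ^ (1 - α) * cC τA α + A2 * χ) +
          2 * Ifun τA τM α χ * (-((1 - α) * χ ^ (1 - α) * cS τA α)))) /
      (Dd τA τM A2 α χ) ^ 2 with hF1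
  have heq : ∀ χ ∈ Ioi (0:ℝ), χ * Ee τA τM A2 α χ = F1 χ := by
    intro χ hχ
    have hχ' : (0:ℝ) < χ := hχ
    have key : χ ^ (1 - α) = χ * χ ^ (-α) := by
      rw [show (1:ℝ) - α = 1 + -α by ring, Real.rpow_add hχ', Real.rpow_one]
    rw [hF1]
    simp only [Ee, Ii', Dd']
    rw [key]
    ring
  have h1 : Continuous fun χ : ℝ => χ ^ (1 - α) := Real.continuous_rpow_const (by linarith)
  have hIc := cont_Ifun (τA := τA) (τM := τM) (α := α) hα1
  have hRc := cont_Rfun (τA := τA) (α := α) hα1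
  have hDc := cont_Dd (τA := τA) (τM := τM) (A2 := A2) (α := α) hα1
  have hnum : Continuous fun χ : ℝ =>
      (-((1 - α) * χ ^ (1 - α) * cS τA α)) * Dd τA τM A2 α χ -
      Ifun τA τM α χ *
        (2 * (Rfun τA α χ + A2 * χ) * (χ + (1 - α) * χ ^ (1 - α) * cC τA α + A2 * χ) +
          2 * Ifun τA τM α χ * (-((1 - α) * χ ^ (1 - α) * cS τA α))) := by
    continuity
  have hD0 : Dd τA τM A2 α 0 ≠ 0 := (Dd_pos (A2 := A2) hτA hτM hα0 hα1 le_rfl).ne'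
  have hcontF1 : Tendsto F1 (𝓝 (0:ℝ)) (𝓝 (F1 0)) := by
    apply ContinuousAt.tendsto
    exact hnum.continuousAt.div ((hDc.pow 2).continuousAt) (pow_ne_zero 2 hD0)
  have hF10 : F1 0 = 0 := by
    rw [hF1]
    norm_num [Real.zero_rpow (show (1:ℝ) - α ≠ 0 by intro h; apply hα1'; linarith),
      Rfun_zero (τA := τA) hα1']
  rw [hF10] at hcontF1
  refine Tendsto.congr' ?_ (hcontF1.mono_left nhdsWithin_le_nhds)
  filter_upwards [self_mem_nhdsWithin] with χ hχ
  exact (heq χ hχ).symm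

include hτA hτM hA2 hα0 hα1 in
lemma tendsto_main :
    Tendsto (fun χ => (Ifun τA τM α χ / Dd τA τM A2 α χ + τM) / χ ^ (1 - α)) (𝓝[>] (0:ℝ))
      (𝓝 (cS τA α * τM ^ 2)) := by
  have hα1' : α ≠ 1 := ne_of_lt hα1
  set F2 : ℝ → ℝ := fun χ =>
    (cS τA α + τM * (cS τA α) ^ 2 * χ ^ (1 - α) +
      τM * ((1 + A2) ^ 2 * χ ^ (1 + α) + 2 * (1 + A2) * cC τA α * χ +
        (cC τA α) ^ 2 * χ ^ (1 - α))) / Dd τA τM A2 α χ with hF2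
  have heq : ∀ χ ∈ Ioi (0:ℝ), (Ifun τA τM α χ / Dd τA τM A2 α χ + τM) / χ ^ (1 - α) = F2 χ := by
    intro χ hχ
    have hχ' : (0:ℝ) < χ := hχ
    have hD : Dd τA τM A2 α χ ≠ 0 := (Dd_pos (A2 := A2) hτA hτM hα0 hα1 hχ'.le).ne'
    have hs : (0:ℝ) < χ ^ (1 - α) := Real.rpow_pos_of_pos hχ' _
    have key : χ ^ (1 - α) * χ ^ (1 + α) = χ ^ 2 := by
      rw [← Real.rpow_add hχ', show (1 - α) + (1 + α) = ((2:ℕ):ℝ) by push_cast; ring,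
        Real.rpow_natCast]
    have key2 : Ifun τA τM α χ + τM * Dd τA τM A2 α χ =
        χ ^ (1 - α) * (cS τA α + τM * (cS τA α) ^ 2 * χ ^ (1 - α) +
          τM * ((1 + A2) ^ 2 * χ ^ (1 + α) + 2 * (1 + A2) * cC τA α * χ +
            (cC τA α) ^ 2 * χ ^ (1 - α))) := by
      unfold Dd
      rw [Ifun_eq, Rfun_eq]
      field_simp
      linear_combination (-(τM ^ 2) * (1 + A2) ^ 2) * key
    rw [hF2]
    rw [div_add' _ _ _ hD, div_div, key2,
      mul_comm (Dd τA τM A2 α χ) (χ ^ (1 - α)), mul_div_mul_left _ _ hs.ne']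
  have h1 : Continuous fun χ : ℝ => χ ^ (1 - α) := Real.continuous_rpow_const (by linarith)
  have h2 : Continuous fun χ : ℝ => χ ^ (1 + α) := Real.continuous_rpow_const (by linarith)
  have hDc := cont_Dd (τA := τA) (τM := τM) (A2 := A2) (α := α) hα1
  have hD0 : Dd τA τM A2 α 0 ≠ 0 := (Dd_pos (A2 := A2) hτA hτM hα0 hα1 le_rfl).ne'
  have hnum : Continuous fun χ : ℝ =>
      cS τA α + τM * (cS τA α) ^ 2 * χ ^ (1 - α) +
      τM * ((1 + A2) ^ 2 * χ ^ (1 + α) + 2 * (1 + A2) * cC τA α * χ +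
        (cC τA α) ^ 2 * χ ^ (1 - α)) := by continuity
  have hcontF2 : Tendsto F2 (𝓝 (0:ℝ)) (𝓝 (F2 0)) :=
    ContinuousAt.tendsto (hnum.continuousAt.div hDc.continuousAt hD0)
  have hF20 : F2 0 = cS τA α * τM ^ 2 := by
    rw [hF2]
    have hz : (0:ℝ) ^ (1 - α) = 0 := Real.zero_rpow (by intro h; apply hα1'; linarith)
    have hz2 : (0:ℝ) ^ (1 + α) = 0 := Real.zero_rpow (by positivity)
    simp only [hz, hz2, Dd_zero (τA := τA) hα1']
    field_simp
    ring
  rw [hF20] at hcontF2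
  refine Tendsto.congr' ?_ (hcontF2.mono_left nhdsWithin_le_nhds)
  filter_upwards [self_mem_nhdsWithin] with χ hχ
  exact (heq χ hχ).symm

end cont

section gd
variable {τA τM A2 α : ℝ} (hτA : 0 < τA) (hτM : 0 < τM) (hA2 : 0 < A2)
  (hα0 : 0 < α) (hα1 : α < 1)

include hτM hα1 in
lemma Gd_zero : Gd τA τM A2 α 0 = -τM := by
  unfold Gd psi
  rw [abs_zero, Ifun_zero (ne_of_lt hα1), Dd_zero (ne_of_lt hα1), zero_mul, add_zero]
  rw [div_eq_iff (by positivity)]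
  field_simp

include hτA hτM hA2 hα0 hα1 in
lemma contAt_Ee {χ₀ : ℝ} (h : 0 < χ₀) : ContinuousAt (Ee τA τM A2 α) χ₀ := by
  have h2 : ContinuousAt (fun χ : ℝ => χ ^ (-α)) χ₀ :=
    Real.continuousAt_rpow_const _ _ (Or.inl h.ne')
  have hIc := (cont_Ifun (τA := τA) (τM := τM) (α := α) hα1).continuousAt (x := χ₀)
  have hRc := (cont_Rfun (τA := τA) (α := α) hα1).continuousAt (x := χ₀)
  have hDc := (cont_Dd (τA := τA) (τM := τM) (A2 := A2) (α := α) hα1).continuousAt (x := χ₀)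
  have hD2 : (Dd τA τM A2 α χ₀) ^ 2 ≠ 0 :=
    pow_ne_zero _ (Dd_pos (A2 := A2) hτA hτM hα0 hα1 h.le).ne'
  have hIi' : ContinuousAt (Ii' τA α) χ₀ := by
    unfold Ii'
    exact ((continuousAt_const.mul h2).mul continuousAt_const).neg
  have hDd' : ContinuousAt (Dd' τA τM A2 α) χ₀ := by
    unfold Dd'
    exact ((continuousAt_const.mul (hRc.add (continuousAt_const.mul continuousAt_id))).mul
      ((continuousAt_const.add ((continuousAt_const.mul h2).mul continuousAt_const)).add
        continuousAt_const)).add ((continuousAt_const.mul hIc).mul hIi')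
  unfold Ee
  exact ((hIi'.mul hDc).sub (hIc.mul hDd')).div (hDc.pow 2) hD2

include hτA hτM hA2 hα0 hα1 in
lemma diffAt_psi {χ₀ : ℝ} (h : 0 < χ₀) : DifferentiableAt ℝ (psi τA τM A2 α) χ₀ := by
  have h1 : DifferentiableAt ℝ (fun χ : ℝ => χ ^ (1 - α)) χ₀ :=
    Real.differentiableAt_rpow_const_of_ne _ h.ne'
  have h2 : DifferentiableAt ℝ (fun χ : ℝ => χ ^ (-α)) χ₀ :=
    Real.differentiableAt_rpow_const_of_ne _ h.ne'
  have hDne : Dd τA τM A2 α χ₀ ≠ 0 := (Dd_pos (A2 := A2) hτA hτM hα0 hα1 h.le).ne'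
  have hI : DifferentiableAt ℝ (Ifun τA τM α) χ₀ := by
    have heq : Ifun τA τM α = fun χ => -1 / τM - χ ^ (1 - α) * cS τA α :=
      funext (Ifun_eq τA τM α)
    rw [heq]; exact (differentiableAt_const _).sub (h1.mul_const _)
  have hR : DifferentiableAt ℝ (Rfun τA α) χ₀ := by
    have heq : Rfun τA α = fun χ => χ + χ ^ (1 - α) * cC τA α := funext (Rfun_eq τA α)
    rw [heq]; exact differentiableAt_id.add (h1.mul_const _)
  have hD : DifferentiableAt ℝ (Dd τA τM A2 α) χ₀ := by
    have heq : Dd τA τM A2 α = fun χ => (Rfun τA α χ + A2 * χ) ^ 2 + Ifun τA τM α χ ^ 2 := rfl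
    rw [heq]
    exact ((hR.add (differentiableAt_id.const_mul A2)).pow 2).add (hI.pow 2)
  have hIi' : DifferentiableAt ℝ (Ii' τA α) χ₀ := by
    have heq : Ii' τA α = fun χ => -((1 - α) * χ ^ (-α) * cS τA α) := rfl
    rw [heq]; exact ((h2.const_mul _).mul_const _).neg
  have hDd' : DifferentiableAt ℝ (Dd' τA τM A2 α) χ₀ := by
    have heq : Dd' τA τM A2 α = fun χ =>
        2 * (Rfun τA α χ + A2 * χ) * ((1 + (1 - α) * χ ^ (-α) * cC τA α) + A2)
          + 2 * Ifun τA τM α χ * Ii' τA α χ := rfl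
    rw [heq]
    exact (((hR.add (differentiableAt_id.const_mul A2)).const_mul 2).mul
      (((differentiableAt_const _).add ((h2.const_mul _).mul_const _)).add
        (differentiableAt_const _))).add ((hI.const_mul 2).mul hIi')
  have hEe : DifferentiableAt ℝ (Ee τA τM A2 α) χ₀ := by
    have heq : Ee τA τM A2 α = fun χ =>
        (Ii' τA α χ * Dd τA τM A2 α χ - Ifun τA τM α χ * Dd' τA τM A2 α χ)
          / (Dd τA τM A2 α χ) ^ 2 := rfl
    rw [heq]
    exact ((hIi'.mul hD).sub (hI.mul hDd')).div (hD.pow 2) (pow_ne_zero 2 hDne)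
  have heq : psi τA τM A2 α = fun χ =>
      Ifun τA τM α χ / Dd τA τM A2 α χ + χ * Ee τA τM A2 α χ := rfl
  rw [heq]
  exact (hI.div hD hDne).add (differentiableAt_id.mul hEe)

include hτA hτM hA2 hα0 hα1 in
lemma cont_Gd : Continuous (Gd τA τM A2 α) := by
  have hGeq : Gd τA τM A2 α = fun x => Qf τA τM A2 α x + |x| * Ee τA τM A2 α |x| := by
    funext x
    unfold Gd psi Qf
    rfl
  rw [hGeq]
  refine continuous_iff_continuousAt.mpr fun x => ?_
  refine ((cont_Qf (A2 := A2) hτA hτM hα0 hα1).continuousAt).add ?_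
  rcases eq_or_ne x 0 with rfl | hx
  · have hIci : Tendsto (fun χ => χ * Ee τA τM A2 α χ) (𝓝[Ici 0] 0) (𝓝 0) := by
      rw [← Set.Ioi_insert, nhdsWithin_insert, tendsto_sup]
      constructor
      · have := tendsto_pure_nhds (fun χ => χ * Ee τA τM A2 α χ) 0
        simpa using this
      · exact tendsto_chiEe hτA hτM hA2 hα0 hα1
    have habs : Tendsto (fun x : ℝ => |x|) (𝓝 0) (𝓝[Ici 0] 0) := by
      rw [tendsto_nhdsWithin_iff]
      constructor
      · simpa using (continuous_abs.tendsto (0 : ℝ))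
      · exact Eventually.of_forall fun x => abs_nonneg x
    have := hIci.comp habs
    have h0 : |(0:ℝ)| * Ee τA τM A2 α |0| = 0 := by simp
    show Tendsto (fun x : ℝ => |x| * Ee τA τM A2 α |x|) (𝓝 0) (𝓝 (|(0:ℝ)| * Ee τA τM A2 α |0|))
    rw [h0]
    exact this
  · exact continuous_abs.continuousAt.mul
      ((contAt_Ee hτA hτM hA2 hα0 hα1 (abs_pos.mpr hx)).comp continuous_abs.continuousAt)

include hτA hτM hA2 hα0 hα1 in
lemma diffAt_Gd {x : ℝ} (hx : x ≠ 0) : DifferentiableAt ℝ (Gd τA τM A2 α) x := by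
  rcases hx.lt_or_gt with h | h
  · have hev : Gd τA τM A2 α =ᶠ[𝓝 x] (fun y => psi τA τM A2 α (-y)) := by
      filter_upwards [Iio_mem_nhds h] with y hy
      unfold Gd
      rw [abs_of_neg (show y < (0:ℝ) from hy)]
    have hd : DifferentiableAt ℝ (fun y => psi τA τM A2 α (-y)) x :=
      (diffAt_psi hτA hτM hA2 hα0 hα1 (show (0:ℝ) < -x by linarith)).comp x
        differentiableAt_id.neg
    exact hd.congr_of_eventuallyEq hev
  · have hev : Gd τA τM A2 α =ᶠ[𝓝 x] psi τA τM A2 α := by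
      filter_upwards [Ioi_mem_nhds h] with y hy
      unfold Gd
      rw [abs_of_pos (show (0:ℝ) < y from hy)]
    exact (diffAt_psi hτA hτM hA2 hα0 hα1 h).congr_of_eventuallyEq hev

end gd

section main
variable {τA τM A2 α : ℝ} (hτA : 0 < τA) (hτM : 0 < τM) (hA2 : 0 < A2)
  (hα0 : 0 < α) (hα1 : α < 1)

include hτA hτM hA2 hα0 hα1 in
lemma not_diffAt_Gd_zero : ¬ DifferentiableAt ℝ (Gd τA τM A2 α) 0 := by
  intro H
  set g : ℝ → ℝ := fun y => y * Qf τA τM A2 α y with hg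
  have hgd : ∀ x, HasDerivAt g (Gd τA τM A2 α x) x := hasDerivAt_g hτA hτM hA2 hα0 hα1
  set L : ℝ := deriv (Gd τA τM A2 α) 0 with hLdef
  have hGdL : HasDerivAt (Gd τA τM A2 α) L 0 := H.hasDerivAt
  set k : ℝ → ℝ := fun y => g y + τM * y - L / 2 * y ^ 2 with hk
  set k' : ℝ → ℝ := fun x => Gd τA τM A2 α x + τM - L * x with hk'
  have hkd : ∀ x, HasDerivAt k (k' x) x := by
    intro x
    have h1 := ((hgd x).add ((hasDerivAt_id x).const_mul τM)).sub
      ((hasDerivAt_pow 2 x).const_mul (L / 2))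
    refine h1.congr_deriv ?_
    rw [hk']
    push_cast
    ring
  have hk'0 : k' 0 = 0 := by
    rw [hk']
    simp only [Gd_zero (τA := τA) (A2 := A2) hτM hα1]
    ring
  have hslope : Tendsto (fun x => k' x / x) (𝓝[≠] (0:ℝ)) (𝓝 0) := by
    have h2 : HasDerivAt k' 0 0 := by
      have h3 := (hGdL.add_const τM).sub ((hasDerivAt_id 0).const_mul L)
      refine h3.congr_deriv ?_
      ring
    have h3 := hasDerivAt_iff_tendsto_slope.mp h2
    refine Filter.Tendsto.congr' ?_ h3
    filter_upwards [self_mem_nhdsWithin] with x hx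
    rw [slope_def_field, hk'0]
    simp
  have hk0 : k 0 = 0 := by rw [hk]; simp [hg]
  have hdiffk : Differentiable ℝ k := fun x => (hkd x).differentiableAt
  have hcontk : Continuous k := hdiffk.continuous
  have hT : Tendsto (fun x => k x / x ^ 2) (𝓝[>] (0:ℝ)) (𝓝 0) := by
    rw [Metric.tendsto_nhdsWithin_nhds]
    intro ε hε
    rw [Metric.tendsto_nhdsWithin_nhds] at hslope
    obtain ⟨δ, hδ, hδ'⟩ := hslope ε hε
    refine ⟨δ, hδ, fun {x} hx hxd => ?_⟩
    have hx' : (0:ℝ) < x := hx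
    obtain ⟨ξ, hξ, hξs⟩ := exists_hasDerivAt_eq_slope k k' hx' hcontk.continuousOn
      (fun t _ => hkd t)
    rw [hk0, sub_zero, sub_zero] at hξs
    have hξ0 : 0 < ξ := hξ.1
    have hξx : ξ < x := hξ.2
    have h5 : dist (k' ξ / ξ) 0 < ε := by
      refine hδ' (show ξ ∈ ({(0:ℝ)}ᶜ : Set ℝ) from hξ0.ne') ?_
      rw [Real.dist_eq, sub_zero] at hxd ⊢
      rw [abs_of_pos hξ0]
      rw [abs_of_pos hx'] at hxd
      linarith
    rw [Real.dist_eq, sub_zero] at h5 ⊢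
    have e1 : k x / x ^ 2 = k' ξ / x := by rw [hξs, div_div, sq]
    rw [e1, abs_div, abs_of_pos hx']
    rw [abs_div, abs_of_pos hξ0] at h5
    calc |k' ξ| / x ≤ |k' ξ| / ξ := by
          apply div_le_div_of_nonneg_left (abs_nonneg _) hξ0 hξx.le
      _ < ε := h5
  have hT2 : Tendsto (fun x => (g x + τM * x) / x ^ 2) (𝓝[>] (0:ℝ)) (𝓝 (L / 2)) := by
    have h6 := hT.add (tendsto_const_nhds (x := L / 2) (f := 𝓝[>] (0:ℝ)))
    rw [zero_add] at h6
    refine Filter.Tendsto.congr' ?_ h6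
    filter_upwards [self_mem_nhdsWithin] with x hx
    have hx2 : x ^ 2 ≠ 0 := pow_ne_zero 2 (show (0:ℝ) < x from hx).ne'
    have hx0 : x ≠ 0 := (show (0:ℝ) < x from hx).ne'
    rw [hk]
    field_simp
    ring
  have hKpos : 0 < cS τA α * τM ^ 2 := by
    have := cS_pos hτA hα0 hα1
    positivity
  have hpow : Tendsto (fun x : ℝ => x ^ (-α)) (𝓝[>] (0:ℝ)) atTop := by
    have h1 : Tendsto (fun x : ℝ => x ^ α) (𝓝[>] (0:ℝ)) (𝓝[>] 0) := by
      rw [tendsto_nhdsWithin_iff]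
      constructor
      · have hc : ContinuousAt (fun x : ℝ => x ^ α) 0 :=
          Real.continuousAt_rpow_const _ _ (Or.inr hα0.le)
        have h7 := hc.tendsto
        rw [Real.zero_rpow hα0.ne'] at h7
        exact h7.mono_left nhdsWithin_le_nhds
      · filter_upwards [self_mem_nhdsWithin] with x hx
        exact Real.rpow_pos_of_pos hx _
    have h2 := h1.inv_tendsto_nhdsGT_zero
    refine Filter.Tendsto.congr' ?_ h2
    filter_upwards [self_mem_nhdsWithin] with x hx
    rw [Pi.inv_apply, ← Real.rpow_neg (le_of_lt hx)]
  have hmain := tendsto_main (A2 := A2) hτA hτM hA2 hα0 hα1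
  have hT3 : Tendsto (fun x => (g x + τM * x) / x ^ 2) (𝓝[>] (0:ℝ)) atTop := by
    have hprod := Filter.Tendsto.pos_mul_atTop hKpos hmain hpow
    refine Filter.Tendsto.congr' ?_ hprod
    filter_upwards [self_mem_nhdsWithin] with x hx
    have hx' : (0:ℝ) < x := hx
    have hs : (0:ℝ) < x ^ (1 - α) := Real.rpow_pos_of_pos hx' _
    have key : x * x ^ (-α) = x ^ (1 - α) := by
      rw [show (1:ℝ) - α = 1 + -α by ring, Real.rpow_add hx', Real.rpow_one]
    have hQ : Qf τA τM A2 α x = Ifun τA τM α x / Dd τA τM A2 α x := by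
      unfold Qf; rw [abs_of_pos hx']
    have e2 : (Ifun τA τM α x / Dd τA τM A2 α x + τM) / x ^ (1 - α) * x ^ (-α)
        = (Ifun τA τM α x / Dd τA τM A2 α x + τM) / x := by
      rw [div_mul_eq_mul_div, div_eq_div_iff hs.ne' hx'.ne']
      rw [mul_assoc, mul_comm (x ^ (-α)) x, key]
    rw [e2, hg]
    simp only [hQ]
    rw [show x * (Ifun τA τM α x / Dd τA τM A2 α x) + τM * x
        = x * (Ifun τA τM α x / Dd τA τM A2 α x + τM) by ring, sq,
      mul_div_mul_left _ _ hx'.ne']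
  exact not_tendsto_atTop_of_tendsto_nhds hT2 hT3

end main

end TideAux

/-- The tidal acceleration has a kink at each half-integer multiple of the
mean motion: if η > 0 and G_q ≠ 0 for some q ∈ {−1, …, 7}, then TIDE is C¹ on ℝ but its
derivative is not differentiable at v = (q+2)n/2. -/
theorem TIDE_kink (τA τM A2 α n η : ℝ) (G : ℤ → ℝ) (q : ℤ)
    (hτA : 0 < τA) (hτM : 0 < τM) (hA2 : 0 < A2) (hα0 : 0 < α) (hα1 : α < 1)
    (hn : 0 < n) (hη : 0 < η) (hq : q ∈ Finset.Icc (-1 : ℤ) 7) (hG : G q ≠ 0) :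
    ContDiff ℝ 1 (TIDE τA τM A2 α n η G) ∧
    ¬ DifferentiableAt ℝ (deriv (TIDE τA τM A2 α n η G)) (((q : ℝ) + 2) * n / 2) := by
  have hfun : nfmeF τA τM A2 α = fun y => y * TideAux.Qf τA τM A2 α y :=
    funext (TideAux.g_eq τA τM A2 α)
  have hgd : ∀ x, HasDerivAt (nfmeF τA τM A2 α) (TideAux.Gd τA τM A2 α x) x := by
    rw [hfun]; exact TideAux.hasDerivAt_g hτA hτM hA2 hα0 hα1
  have hcontGd := TideAux.cont_Gd hτA hτM hA2 hα0 hα1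
  have hinner : ∀ (q' : ℤ) (v : ℝ),
      HasDerivAt (fun v : ℝ => ((q' : ℝ) + 2) * n - 2 * v) (-2) v := by
    intro q' v
    have h := ((hasDerivAt_id v).const_mul 2).const_sub (((q' : ℝ) + 2) * n)
    simpa using h
  have hTd : ∀ v, HasDerivAt (TIDE τA τM A2 α n η G)
      (-η * ∑ q' ∈ Finset.Icc (-1 : ℤ) 7,
        (G q') ^ 2 * (TideAux.Gd τA τM A2 α (((q' : ℝ) + 2) * n - 2 * v) * (-2))) v := by
    intro v
    unfold TIDE
    refine HasDerivAt.const_mul _ (HasDerivAt.fun_sum fun q' _ => ?_)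
    exact ((hgd _).comp v (hinner q' v)).const_mul _
  have hderiv : deriv (TIDE τA τM A2 α n η G) = fun v =>
      -η * ∑ q' ∈ Finset.Icc (-1 : ℤ) 7,
        (G q') ^ 2 * (TideAux.Gd τA τM A2 α (((q' : ℝ) + 2) * n - 2 * v) * (-2)) :=
    funext fun v => (hTd v).deriv
  constructor
  · rw [contDiff_one_iff_deriv]
    refine ⟨fun v => (hTd v).differentiableAt, ?_⟩
    rw [hderiv]
    refine continuous_const.mul (continuous_finset_sum _ fun q' _ => ?_)
    exact continuous_const.mul ((hcontGd.comp
      (continuous_const.sub (continuous_const.mul continuous_id))).mul continuous_const)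
  · intro H
    rw [hderiv] at H
    set v₀ : ℝ := ((q : ℝ) + 2) * n / 2 with hv₀
    set S : ℝ → ℝ := fun v => ∑ q' ∈ Finset.Icc (-1 : ℤ) 7,
        (G q') ^ 2 * (TideAux.Gd τA τM A2 α (((q' : ℝ) + 2) * n - 2 * v) * (-2)) with hS
    have hSd : DifferentiableAt ℝ S v₀ := by
      have h1 := H.const_mul (-η)⁻¹
      have h2 : (fun v => (-η)⁻¹ * (-η * S v)) = S := by
        funext v; field_simp
      rwa [h2] at h1
    have hterm : ∀ q' ∈ Finset.Icc (-1 : ℤ) 7, q' ≠ q →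
        DifferentiableAt ℝ
          (fun v => (G q') ^ 2 * (TideAux.Gd τA τM A2 α (((q' : ℝ) + 2) * n - 2 * v) * (-2)))
          v₀ := by
      intro q' _ hne
      have hcast : ((q' : ℝ)) ≠ (q : ℝ) := by exact_mod_cast hne
      have harg : ((q' : ℝ) + 2) * n - 2 * v₀ ≠ 0 := by
        rw [hv₀, show ((q' : ℝ) + 2) * n - 2 * (((q : ℝ) + 2) * n / 2)
          = ((q' : ℝ) - (q : ℝ)) * n by ring]
        exact mul_ne_zero (sub_ne_zero.mpr hcast) hn.ne'
      have hd : DifferentiableAt ℝ (fun v : ℝ => ((q' : ℝ) + 2) * n - 2 * v) v₀ :=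
        (differentiableAt_const _).sub (differentiableAt_id.const_mul 2)
      exact (((TideAux.diffAt_Gd hτA hτM hA2 hα0 hα1 harg).comp v₀ hd).mul_const _).const_mul _
    have herase : DifferentiableAt ℝ (fun v => ∑ q' ∈ (Finset.Icc (-1 : ℤ) 7).erase q,
        (G q') ^ 2 * (TideAux.Gd τA τM A2 α (((q' : ℝ) + 2) * n - 2 * v) * (-2))) v₀ :=
      DifferentiableAt.fun_sum fun q' hq' =>
        hterm q' (Finset.mem_of_mem_erase hq') (Finset.ne_of_mem_erase hq')
    have hfq : DifferentiableAt ℝ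
        (fun v => (G q) ^ 2 * (TideAux.Gd τA τM A2 α (((q : ℝ) + 2) * n - 2 * v) * (-2)))
        v₀ := by
      have h3 := hSd.sub herase
      have h4 : (fun v => S v - ∑ q' ∈ (Finset.Icc (-1 : ℤ) 7).erase q,
          (G q') ^ 2 * (TideAux.Gd τA τM A2 α (((q' : ℝ) + 2) * n - 2 * v) * (-2)))
          = fun v => (G q) ^ 2 * (TideAux.Gd τA τM A2 α (((q : ℝ) + 2) * n - 2 * v) * (-2)) := by
        funext v
        simp only [hS]
        rw [← Finset.sum_erase_add _ _ hq]
        ring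
      rw [← h4]; exact h3
    have hGdq : DifferentiableAt ℝ
        (fun v => TideAux.Gd τA τM A2 α (((q : ℝ) + 2) * n - 2 * v)) v₀ := by
      have h5 := hfq.const_mul ((G q) ^ 2 * (-2))⁻¹
      have hG2 : (G q) ^ 2 ≠ 0 := pow_ne_zero _ hG
      have h6 : (fun v => ((G q) ^ 2 * (-2))⁻¹ *
          ((G q) ^ 2 * (TideAux.Gd τA τM A2 α (((q : ℝ) + 2) * n - 2 * v) * (-2))))
          = fun v => TideAux.Gd τA τM A2 α (((q : ℝ) + 2) * n - 2 * v) := by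
        funext v
        field_simp
      rwa [h6] at h5
    have hfinal : DifferentiableAt ℝ (TideAux.Gd τA τM A2 α) 0 := by
      have hd : DifferentiableAt ℝ (fun x : ℝ => (((q : ℝ) + 2) * n - x) / 2) 0 :=
        ((differentiableAt_const _).sub differentiableAt_id).div_const _
      have h8 : (fun x : ℝ => (((q : ℝ) + 2) * n - x) / 2) 0 = v₀ := by
        rw [hv₀]; norm_num
      have h9 := DifferentiableAt.comp 0 (h8.symm ▸ hGdq) hd
      have h10 : ((fun v => TideAux.Gd τA τM A2 α (((q : ℝ) + 2) * n - 2 * v)) ∘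
          (fun x : ℝ => (((q : ℝ) + 2) * n - x) / 2)) = TideAux.Gd τA τM A2 α := by
        funext x
        simp only [Function.comp_apply]
        congr 1
        ring
      rwa [h10] at h9
    exact TideAux.not_diffAt_Gd_zero hτA hτM hA2 hα0 hα1 hfinal
end
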